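/- arXiv:2210.14689 — 8 statements merged into one kernel-verified Lean document; each statement's English description precedes it below -/
import Mathlib

section
/- Given a fixed point free pair of homomorphisms φ, ψ : G → N between finite groups of the same order, the subset {λ(φ(σ))ρ(ψ(σ)) : σ ∈ G} of Hol(N) is a regular subgroup of Perm(N) isomorphic to G. -/
/-- The left regular representation `λ(γ) = (x ↦ γx)`. -/
def lam (Γ : Type*) [Group Γ] : Γ →* Equiv.Perm Γ :=
  MonoidHom.mk' (fun γ => Equiv.mulLeft γ) (by intro a b; ext x; simp [mul_assoc])

/-- The right regular representation `ρ(γ) = (x ↦ xγ⁻¹)`. -/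
def rho (Γ : Type*) [Group Γ] : Γ →* Equiv.Perm Γ :=
  MonoidHom.mk' (fun γ => Equiv.mulRight γ⁻¹)
    (by intro a b; ext x; simp [mul_assoc])

/-- The holomorph `Hol(Γ)`. -/
def Hol (Γ : Type*) [Group Γ] : Subgroup (Equiv.Perm Γ) :=
  Subgroup.closure (Set.range (rho Γ) ∪ Set.range (MulAut.toPerm (M := Γ)))

/-- A subgroup of `Perm Γ` is regular if it acts transitively and freely on `Γ`. -/
def IsRegularSubgroup {Γ : Type*} [Group Γ] (Δ : Subgroup (Equiv.Perm Γ)) : Prop :=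
  (∀ x y : Γ, ∃ δ ∈ Δ, δ x = y) ∧ ∀ δ ∈ Δ, δ ≠ 1 → ∀ x : Γ, δ x ≠ x

/-- Given a fixed point free pair of homomorphisms `φ, ψ : G → N` between finite groups
of the same order, the subset `{λ(φ(σ))ρ(ψ(σ)) : σ ∈ G}` of `Hol(N)` is a regular
subgroup of `Perm N` isomorphic to `G`. -/
theorem stmt3 {G N : Type*} [Group G] [Group N] [Fintype G] [Fintype N]
    (hcard : Fintype.card G = Fintype.card N)
    (φ ψ : G →* N) (hfpf : ∀ σ : G, φ σ = ψ σ → σ = 1) :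
    ∃ Δ : Subgroup (Equiv.Perm N),
      (Δ : Set (Equiv.Perm N)) = {p | ∃ σ : G, p = lam N (φ σ) * rho N (ψ σ)} ∧
      Δ ≤ Hol N ∧ IsRegularSubgroup Δ ∧ Nonempty (G ≃* Δ) := by
  -- the combined homomorphism
  set f : G →* Equiv.Perm N := MonoidHom.mk'
    (fun σ => lam N (φ σ) * rho N (ψ σ))
    (by
      intro a b
      ext x
      simp [lam, rho, map_mul, mul_assoc]) with hf
  have hfapp : ∀ (σ : G) (x : N), f σ x = φ σ * x * (ψ σ)⁻¹ := by
    intro σ x; simp [hf, lam, rho, mul_assoc]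
  have hinj : Function.Injective (fun σ : G => φ σ * (ψ σ)⁻¹) := by
    intro a b h
    simp only at h
    have h2 : (φ b)⁻¹ * φ a = (ψ b)⁻¹ * ψ a := by
      have := congrArg (fun n => (φ b)⁻¹ * n * ψ a) h
      simpa [mul_assoc] using this
    have h3 : φ (b⁻¹ * a) = ψ (b⁻¹ * a) := by
      simpa [map_mul, map_inv] using h2
    have := hfpf _ h3
    rw [inv_mul_eq_one] at this
    exact this.symm
  have hbij : Function.Bijective (fun σ : G => φ σ * (ψ σ)⁻¹) :=
    (Fintype.bijective_iff_injective_and_card _).2 ⟨hinj, hcard⟩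
  have he : ∀ σ : G, f σ 1 = φ σ * (ψ σ)⁻¹ := by
    intro σ; simp [hfapp]
  refine ⟨f.range, ?_, ?_, ⟨?_, ?_⟩, ⟨(MonoidHom.ofInjective ?_)⟩⟩
  · ext p
    simp only [MonoidHom.coe_range, Set.mem_range, Set.mem_setOf_eq]
    constructor
    · rintro ⟨σ, rfl⟩; exact ⟨σ, rfl⟩
    · rintro ⟨σ, rfl⟩; exact ⟨σ, rfl⟩
  · -- f.range ≤ Hol N
    rintro p ⟨σ, rfl⟩
    have hrho : ∀ η : N, rho N η ∈ Hol N := fun η =>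
      Subgroup.subset_closure (Or.inl ⟨η, rfl⟩)
    have hlam : ∀ η : N, lam N η ∈ Hol N := by
      intro η
      have : lam N η = MulAut.toPerm (M := N) (MulAut.conj η) * rho N η⁻¹ := by
        ext x; simp [lam, rho, MulAut.toPerm, MulAut.conj_apply, mul_assoc]
        show η * x = η * (x * η) * η⁻¹; group
      rw [this]
      exact mul_mem (Subgroup.subset_closure (Or.inr ⟨MulAut.conj η, rfl⟩)) (hrho _)
    exact mul_mem (hlam _) (hrho _)
  · -- transitive
    intro x y
    obtain ⟨τ, hτ⟩ := hbij.2 x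
    obtain ⟨σ, hσ⟩ := hbij.2 y
    refine ⟨f (σ * τ⁻¹), ⟨_, rfl⟩, ?_⟩
    have hx : f τ 1 = x := by rw [he]; exact hτ
    have : f (σ * τ⁻¹) x = f (σ * τ⁻¹) (f τ 1) := by rw [hx]
    rw [this, ← Equiv.Perm.mul_apply, ← map_mul]
    simpa [he] using hσ
  · -- free
    rintro δ ⟨σ, rfl⟩ hδ x hx
    obtain ⟨τ, hτ⟩ := hbij.2 x
    have hx1 : f τ 1 = x := by rw [he]; exact hτ
    have h1 : f (σ * τ) 1 = f τ 1 := by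
      rw [map_mul, Equiv.Perm.mul_apply, hx1, hx]
    have h2 : φ (σ * τ) * (ψ (σ * τ))⁻¹ = φ τ * (ψ τ)⁻¹ := by
      rw [← he, ← he]; exact h1
    have h3 : σ * τ = τ := hinj h2
    have hσ1 : σ = 1 := by
      have h4 : σ * τ = 1 * τ := by simpa using h3
      exact mul_right_cancel h4
    exact hδ (by rw [hσ1, map_one])
  · -- f injective
    intro a b h
    apply hinj
    have := congrArg (fun p : Equiv.Perm N => p 1) h
    simpa [he] using this
end

section
/- If a finite group N admits an exact factorization N = AB by subgroups A and B (i.e., N = AB and A ∩ B = 1), then the pair (A × B, N) is realizable; that is, Hol(N) contains a regular subgroup isomorphic to A × B. -/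
/-- `(G, N)` is realizable: `Hol(N)` contains a regular subgroup isomorphic to `G`. -/
def Realizable (G : Type*) [Group G] (N : Type*) [Group N] : Prop :=
  ∃ Δ : Subgroup (Equiv.Perm N), Δ ≤ Hol N ∧ IsRegularSubgroup Δ ∧ Nonempty (G ≃* Δ)

/-- Left translation is in the holomorph. -/
lemma mulLeft_mem_Hol {Γ : Type*} [Group Γ] (a : Γ) : Equiv.mulLeft a ∈ Hol Γ := by
  have h1 : rho Γ a⁻¹ ∈ Hol Γ :=
    Subgroup.subset_closure (Or.inl ⟨a⁻¹, rfl⟩)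
  have h2 : MulAut.toPerm (M := Γ) (MulAut.conj a) ∈ Hol Γ :=
    Subgroup.subset_closure (Or.inr ⟨MulAut.conj a, rfl⟩)
  have : Equiv.mulLeft a = rho Γ a⁻¹ * MulAut.toPerm (M := Γ) (MulAut.conj a) := by
    ext x
    simp [rho, Equiv.Perm.mul_apply, MulAut.toPerm, MulAut.conj_apply, mul_assoc]
    show a * x = a * x * a⁻¹ * a
    group
  rw [this]
  exact mul_mem h1 h2

lemma mulRight_mem_Hol {Γ : Type*} [Group Γ] (b : Γ) : Equiv.mulRight b⁻¹ ∈ Hol Γ :=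
  Subgroup.subset_closure (Or.inl ⟨b, rfl⟩)

/-- If a finite group `N` admits an exact factorization `N = AB`, then the pair
`(A × B, N)` is realizable. -/
theorem stmt4 {N : Type*} [Group N] [Finite N] (A B : Subgroup N)
    (hfact : ∀ n : N, ∃ a ∈ A, ∃ b ∈ B, n = a * b)
    (hexact : A ⊓ B = ⊥) :
    Realizable (A × B) N := by
  set φ : ↥A × ↥B →* Equiv.Perm N :=
    MonoidHom.mk' (fun p => Equiv.mulLeft (p.1 : N) * Equiv.mulRight ((p.2 : N))⁻¹)
      (by intro p q; ext x; simp [mul_assoc]) with hφ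
  have hφapp : ∀ (p : ↥A × ↥B) (x : N), φ p x = (p.1 : N) * x * (p.2 : N)⁻¹ := by
    intro p x; simp [hφ, mul_assoc]
  -- triviality criterion
  have key : ∀ (p : ↥A × ↥B) (x : N), φ p x = x → p = 1 := by
    intro p x hx
    obtain ⟨a₁, ha₁, b₁, hb₁, hx1⟩ := hfact x
    rw [hφapp] at hx
    have hc : a₁⁻¹ * (p.1 : N) * a₁ = b₁ * (p.2 : N) * b₁⁻¹ := by
      subst hx1
      calc a₁⁻¹ * (p.1 : N) * a₁
          = a₁⁻¹ * ((p.1 : N) * (a₁ * b₁) * (p.2 : N)⁻¹) * (p.2 : N) * b₁⁻¹ := by group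
        _ = a₁⁻¹ * (a₁ * b₁) * (p.2 : N) * b₁⁻¹ := by rw [hx]
        _ = b₁ * (p.2 : N) * b₁⁻¹ := by group
    have hmemA : a₁⁻¹ * (p.1 : N) * a₁ ∈ A := by
      exact mul_mem (mul_mem (inv_mem ha₁) p.1.2) ha₁
    have hmemB : a₁⁻¹ * (p.1 : N) * a₁ ∈ B := by
      rw [hc]; exact mul_mem (mul_mem hb₁ p.2.2) (inv_mem hb₁)
    have h1 : a₁⁻¹ * (p.1 : N) * a₁ = 1 := by
      have : a₁⁻¹ * (p.1 : N) * a₁ ∈ A ⊓ B := ⟨hmemA, hmemB⟩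
      rw [hexact] at this
      exact this
    have ha : (p.1 : N) = 1 := by
      have : (p.1 : N) = a₁ * 1 * a₁⁻¹ := by rw [← h1]; group
      simpa using this
    have hb : (p.2 : N) = 1 := by
      rw [hc] at h1
      have : (p.2 : N) = b₁⁻¹ * 1 * b₁ := by
        rw [← h1]; group
      simpa using this
    exact Prod.ext (Subtype.ext ha) (Subtype.ext hb)
  have hinj : Function.Injective φ := by
    apply (injective_iff_map_eq_one φ).mpr
    intro p hp
    exact key p 1 (by rw [hp]; rfl)
  refine ⟨φ.range, ?_, ⟨?_, ?_⟩, ⟨MonoidHom.ofInjective hinj⟩⟩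
  · rintro δ ⟨p, rfl⟩
    exact mul_mem (mulLeft_mem_Hol (p.1 : N)) (mulRight_mem_Hol (p.2 : N))
  · intro x y
    obtain ⟨a₁, ha₁, b₁, hb₁, hx1⟩ := hfact x
    obtain ⟨a₂, ha₂, b₂, hb₂, hy1⟩ := hfact y
    refine ⟨φ (⟨a₂ * a₁⁻¹, mul_mem ha₂ (inv_mem ha₁)⟩, ⟨b₂⁻¹ * b₁, mul_mem (inv_mem hb₂) hb₁⟩),
      ⟨_, rfl⟩, ?_⟩
    rw [hφapp]
    subst hx1; subst hy1
    group
  · rintro δ ⟨p, rfl⟩ hδ x hx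
    exact hδ (by rw [key p x hx]; simp)
end

section
/- With f, g, h as above (f : G → Aut(N) a homomorphism, g : G → N a bijection with g(στ) = g(σ)·f(σ)(g(τ)), and h(σ) = conj(g(σ))f(σ)), the product set f(G)h(G) is a subgroup of Aut(N), it contains Inn(N), and f(G)·Inn(N) = h(G)·Inn(N). -/
open Pointwise

private lemma conj_comm' {N : Type*} [Group N] (φ : MulAut N) (n : N) :
    φ * MulAut.conj n = MulAut.conj (φ n) * φ := by
  ext m
  simp [MulAut.conj_apply, map_mul, map_inv, mul_assoc]

private lemma key' {N : Type*} [Group N] (φ : MulAut N) (a n : N) :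
    φ⁻¹ * MulAut.conj a * (φ * MulAut.conj n) = MulAut.conj (φ⁻¹ a * n) := by
  rw [map_mul, conj_comm' φ⁻¹ a]
  group

/-- With `f : G → Aut(N)` a homomorphism, `g : G → N` a bijection satisfying the cocycle
condition, and `h(σ) = conj(g(σ))f(σ)`, the product set `f(G)h(G)` is a subgroup of
`Aut(N)` containing `Inn(N)`, and `f(G)·Inn(N) = h(G)·Inn(N)`. -/
theorem stmt6 {G N : Type*} [Group G] [Group N] [Fintype G] [Fintype N]
    (hcard : Fintype.card G = Fintype.card N)
    (f : G →* MulAut N) (g : G → N) (hg : Function.Bijective g)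
    (hcoc : ∀ σ τ : G, g (σ * τ) = g σ * f σ (g τ))
    (h : G → MulAut N) (hh : ∀ σ : G, h σ = MulAut.conj (g σ) * f σ) :
    ∃ P : Subgroup (MulAut N),
      (P : Set (MulAut N)) = Set.range f * Set.range h ∧
      ((MulAut.conj : N →* MulAut N).range ≤ P) ∧
      Set.range f * ((MulAut.conj : N →* MulAut N).range : Set (MulAut N)) =
        Set.range h * ((MulAut.conj : N →* MulAut N).range : Set (MulAut N)) := by
  set I := (MulAut.conj : N →* MulAut N).range with hI
  haveI : I.Normal := by
    constructor
    rintro x ⟨n, rfl⟩ φ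
    refine ⟨φ n, ?_⟩
    rw [conj_comm' φ n]
    group
  refine ⟨I ⊔ f.range, ?_, le_sup_left, ?_⟩
  · rw [Subgroup.normal_mul]
    ext x
    constructor
    · rintro ⟨-, ⟨n, rfl⟩, -, ⟨ρ, rfl⟩, rfl⟩
      obtain ⟨σ, hσ⟩ := hg.surjective (g ρ * n⁻¹)
      refine ⟨f σ, ⟨σ, rfl⟩, h (σ⁻¹ * ρ), ⟨σ⁻¹ * ρ, rfl⟩, ?_⟩
      dsimp only
      have h1 : f σ (g (σ⁻¹ * ρ)) = n := by
        have := hcoc σ (σ⁻¹ * ρ)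
        rw [mul_inv_cancel_left] at this
        rw [← mul_left_cancel_iff (a := g σ), ← this, hσ]
        group
      rw [hh, ← mul_assoc, conj_comm' (f σ) (g (σ⁻¹ * ρ)), h1, mul_assoc, ← map_mul,
        mul_inv_cancel_left]
    · rintro ⟨-, ⟨σ, rfl⟩, -, ⟨τ, rfl⟩, rfl⟩
      refine ⟨MulAut.conj (f σ (g τ)), ⟨_, rfl⟩, f (σ * τ), ⟨σ * τ, rfl⟩, ?_⟩
      dsimp only
      rw [hh, ← mul_assoc, conj_comm' (f σ) (g τ), map_mul, mul_assoc]
  · ext x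
    constructor
    · rintro ⟨-, ⟨σ, rfl⟩, -, ⟨n, rfl⟩, rfl⟩
      refine ⟨h σ, ⟨σ, rfl⟩, MulAut.conj ((f σ)⁻¹ (g σ)⁻¹ * n), ⟨_, rfl⟩, ?_⟩
      dsimp only
      rw [← key' (f σ) ((g σ)⁻¹) n, hh, map_inv]
      group
    · rintro ⟨-, ⟨σ, rfl⟩, -, ⟨n, rfl⟩, rfl⟩
      refine ⟨f σ, ⟨σ, rfl⟩, MulAut.conj ((f σ)⁻¹ (g σ) * n), ⟨_, rfl⟩, ?_⟩
      dsimp only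
      rw [← key' (f σ) (g σ) n, hh]
      group
end

section
/- If (G, N) is realizable, then there exists a subgroup P of Aut(N) containing Inn(N) such that P = AB where A and B are subgroups that are isomorphic to quotients of G and satisfy A·Inn(N) = B·Inn(N). -/
open Pointwise

namespace Stmt7Aux

variable {N : Type*} [Group N]

/-- Key structural property of elements of the holomorph. -/
lemma holP {σ : Equiv.Perm N} (hσ : σ ∈ Hol N) :
    ∀ x y : N, σ (x * y) = σ x * (σ 1)⁻¹ * σ y := by
  induction hσ using Subgroup.closure_induction with
  | mem τ hτ =>
    rcases hτ with ⟨n, rfl⟩ | ⟨φ, rfl⟩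
    · intro x y
      show (x * y) * n⁻¹ = (x * n⁻¹) * ((1 : N) * n⁻¹)⁻¹ * (y * n⁻¹)
      group
    · intro x y
      show φ (x * y) = φ x * (φ 1)⁻¹ * φ y
      simp
  | one => intro x y; simp
  | mul σ τ hσm hτm ihσ ihτ =>
    have hinv : ∀ a : N, σ a⁻¹ = σ 1 * (σ a)⁻¹ * σ 1 := by
      intro a
      have h := ihσ a a⁻¹
      rw [mul_inv_cancel] at h
      apply mul_left_cancel (a := σ a * (σ 1)⁻¹)
      rw [← mul_assoc, ← h]
      group
    intro x y
    show σ (τ (x * y)) = σ (τ x) * (σ (τ 1))⁻¹ * σ (τ y)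
    rw [ihτ x y, ihσ (τ x * (τ 1)⁻¹) (τ y), ihσ (τ x) (τ 1)⁻¹, hinv (τ 1)]
    group
  | inv σ hσm ihσ =>
    have hinv : ∀ a : N, σ a⁻¹ = σ 1 * (σ a)⁻¹ * σ 1 := by
      intro a
      have h := ihσ a a⁻¹
      rw [mul_inv_cancel] at h
      apply mul_left_cancel (a := σ a * (σ 1)⁻¹)
      rw [← mul_assoc, ← h]
      group
    intro x y
    apply σ.injective
    show σ (σ⁻¹ (x * y)) = σ (σ⁻¹ x * (σ⁻¹ 1)⁻¹ * σ⁻¹ y)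
    rw [ihσ (σ⁻¹ x * (σ⁻¹ 1)⁻¹) (σ⁻¹ y), ihσ (σ⁻¹ x) (σ⁻¹ 1)⁻¹, hinv (σ⁻¹ 1)]
    simp only [Equiv.Perm.inv_def, Equiv.apply_symm_apply]
    group

lemma holInv {σ : Equiv.Perm N} (hσ : σ ∈ Hol N) (a : N) :
    σ a⁻¹ = σ 1 * (σ a)⁻¹ * σ 1 := by
  have h := holP hσ a a⁻¹
  rw [mul_inv_cancel] at h
  apply mul_left_cancel (a := σ a * (σ 1)⁻¹)
  rw [← mul_assoc, ← h]
  group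

variable {Δ : Subgroup (Equiv.Perm N)}

/-- The projection `Δ → Aut(N)`, `δ = ρ(n)·α ↦ α`. -/
def alpha (hΔ : Δ ≤ Hol N) : Δ →* MulAut N :=
  MonoidHom.mk'
    (fun δ =>
      { toEquiv := (δ : Equiv.Perm N).trans (Equiv.mulRight ((δ : Equiv.Perm N) 1)⁻¹)
        map_mul' := fun x y => by
          show (δ : Equiv.Perm N) (x * y) * ((δ : Equiv.Perm N) 1)⁻¹
            = ((δ : Equiv.Perm N) x * ((δ : Equiv.Perm N) 1)⁻¹)
              * ((δ : Equiv.Perm N) y * ((δ : Equiv.Perm N) 1)⁻¹)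
          rw [holP (hΔ δ.2) x y]
          group })
    (by
      intro a b
      ext x
      show (a : Equiv.Perm N) ((b : Equiv.Perm N) x) * ((a : Equiv.Perm N) ((b : Equiv.Perm N) 1))⁻¹
        = (a : Equiv.Perm N) ((b : Equiv.Perm N) x * ((b : Equiv.Perm N) 1)⁻¹)
          * ((a : Equiv.Perm N) 1)⁻¹
      rw [holP (hΔ a.2) ((b : Equiv.Perm N) x) ((b : Equiv.Perm N) 1)⁻¹,
        holInv (hΔ a.2) ((b : Equiv.Perm N) 1)]
      group)

/-- The twisted projection `δ = ρ(n)·α ↦ conj(n)·α`, i.e. `x ↦ δ(1)⁻¹ δ(x)`. -/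
def beta (hΔ : Δ ≤ Hol N) : Δ →* MulAut N :=
  MonoidHom.mk'
    (fun δ =>
      { toEquiv := (δ : Equiv.Perm N).trans (Equiv.mulLeft ((δ : Equiv.Perm N) 1)⁻¹)
        map_mul' := fun x y => by
          show ((δ : Equiv.Perm N) 1)⁻¹ * (δ : Equiv.Perm N) (x * y)
            = (((δ : Equiv.Perm N) 1)⁻¹ * (δ : Equiv.Perm N) x)
              * (((δ : Equiv.Perm N) 1)⁻¹ * (δ : Equiv.Perm N) y)
          rw [holP (hΔ δ.2) x y]
          group })
    (by
      intro a b
      ext x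
      show ((a : Equiv.Perm N) ((b : Equiv.Perm N) 1))⁻¹ * (a : Equiv.Perm N) ((b : Equiv.Perm N) x)
        = ((a : Equiv.Perm N) 1)⁻¹
          * (a : Equiv.Perm N) (((b : Equiv.Perm N) 1)⁻¹ * (b : Equiv.Perm N) x)
      rw [holP (hΔ a.2) ((b : Equiv.Perm N) 1)⁻¹ ((b : Equiv.Perm N) x),
        holInv (hΔ a.2) ((b : Equiv.Perm N) 1)]
      group)

lemma alpha_apply (hΔ : Δ ≤ Hol N) (δ : Δ) (x : N) :
    alpha hΔ δ x = (δ : Equiv.Perm N) x * ((δ : Equiv.Perm N) 1)⁻¹ := rfl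

lemma beta_apply (hΔ : Δ ≤ Hol N) (δ : Δ) (x : N) :
    beta hΔ δ x = ((δ : Equiv.Perm N) 1)⁻¹ * (δ : Equiv.Perm N) x := rfl

instance inn_normal : ((MulAut.conj : N →* MulAut N).range).Normal := by
  constructor
  rintro _ ⟨n, rfl⟩ φ
  refine ⟨φ n, ?_⟩
  ext x
  show φ n * x * (φ n)⁻¹ = φ (n * φ⁻¹ x * n⁻¹)
  simp [mul_assoc]

/-- `β δ = conj(δ 1) ⁻¹ᶜ ... ` : relation between alpha and beta. -/
lemma beta_eq (hΔ : Δ ≤ Hol N) (δ : Δ) :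
    beta hΔ δ = MulAut.conj (((δ : Equiv.Perm N) 1)⁻¹) * alpha hΔ δ := by
  ext x
  show ((δ : Equiv.Perm N) 1)⁻¹ * (δ : Equiv.Perm N) x
    = ((δ : Equiv.Perm N) 1)⁻¹ * ((δ : Equiv.Perm N) x * ((δ : Equiv.Perm N) 1)⁻¹)
      * (((δ : Equiv.Perm N) 1)⁻¹)⁻¹
  group

lemma conj_eq (hΔ : Δ ≤ Hol N) (δ : Δ) :
    MulAut.conj ((δ : Equiv.Perm N) 1) = alpha hΔ δ * (beta hΔ δ)⁻¹ := by
  have h := beta_eq hΔ δ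
  have : alpha hΔ δ = MulAut.conj ((δ : Equiv.Perm N) 1) * beta hΔ δ := by
    rw [h, map_inv]
    group
  rw [this]
  group

end Stmt7Aux

open Stmt7Aux

/-- If `(G, N)` is realizable, then some subgroup `P` of `Aut(N)` containing `Inn(N)`
factorizes as `P = AB` with `A`, `B` isomorphic to quotients of `G` and
`A·Inn(N) = B·Inn(N)`. -/
theorem stmt7 {G N : Type*} [Group G] [Group N] [Fintype G] [Fintype N]
    (hcard : Fintype.card G = Fintype.card N) (hreal : Realizable G N) :
    ∃ P A B : Subgroup (MulAut N),
      (MulAut.conj : N →* MulAut N).range ≤ P ∧ A ≤ P ∧ B ≤ P ∧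
      (P : Set (MulAut N)) = (A : Set (MulAut N)) * (B : Set (MulAut N)) ∧
      (∃ π : G →* A, Function.Surjective π) ∧
      (∃ π : G →* B, Function.Surjective π) ∧
      (A : Set (MulAut N)) * ((MulAut.conj : N →* MulAut N).range : Set (MulAut N)) =
        (B : Set (MulAut N)) * ((MulAut.conj : N →* MulAut N).range : Set (MulAut N)) := by
  obtain ⟨Δ, hΔ, ⟨htrans, -⟩, ⟨e⟩⟩ := hreal
  set Inn : Subgroup (MulAut N) := (MulAut.conj : N →* MulAut N).range with hInn
  set A : Subgroup (MulAut N) := (alpha hΔ).range with hA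
  set B : Subgroup (MulAut N) := (beta hΔ).range with hB
  set P : Subgroup (MulAut N) := A ⊔ Inn with hP
  have hBA : B ≤ P := by
    rintro _ ⟨δ, rfl⟩
    rw [beta_eq hΔ δ]
    exact mul_mem (Subgroup.mem_sup_right ⟨_, rfl⟩) (Subgroup.mem_sup_left ⟨δ, rfl⟩)
  have hsup : A ⊔ Inn = B ⊔ Inn := by
    apply le_antisymm
    · apply sup_le ?_ le_sup_right
      rintro _ ⟨δ, rfl⟩
      have : alpha hΔ δ = MulAut.conj ((δ : Equiv.Perm N) 1) * beta hΔ δ := by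
        rw [beta_eq hΔ δ, map_inv]; group
      rw [this]
      exact mul_mem (Subgroup.mem_sup_right ⟨_, rfl⟩) (Subgroup.mem_sup_left ⟨δ, rfl⟩)
    · apply sup_le ?_ le_sup_right
      rintro _ ⟨δ, rfl⟩
      rw [beta_eq hΔ δ]
      exact mul_mem (Subgroup.mem_sup_right ⟨_, rfl⟩) (Subgroup.mem_sup_left ⟨δ, rfl⟩)
  refine ⟨P, A, B, le_sup_right, le_sup_left, hBA, ?_, ?_, ?_, ?_⟩
  · -- ↑P = ↑A * ↑B
    apply Set.Subset.antisymm
    · -- P = Inn ⊔ B as subgroups, carrier Inn * B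
      have hPIB : P = Inn ⊔ B := by rw [hP, hsup, sup_comm]
      rw [hPIB]
      rw [Subgroup.normal_mul Inn B]
      rintro _ ⟨_, ⟨m, rfl⟩, b, hb, rfl⟩
      obtain ⟨d, hd, hd1⟩ := htrans 1 m
      set δ : Δ := ⟨d, hd⟩ with hδ
      have hδ1 : (δ : Equiv.Perm N) 1 = m := hd1
      show MulAut.conj m * b ∈ (A : Set (MulAut N)) * (B : Set (MulAut N))
      have heq : MulAut.conj m * b = alpha hΔ δ * ((beta hΔ δ)⁻¹ * b) := by
        rw [← hδ1, conj_eq hΔ δ, mul_assoc]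
      rw [heq]
      exact Set.mul_mem_mul ⟨δ, rfl⟩ (mul_mem (inv_mem ⟨δ, rfl⟩) hb)
    · rintro _ ⟨a, ha, b, hb, rfl⟩
      exact mul_mem (Subgroup.mem_sup_left ha) (hBA hb)
  · exact ⟨(alpha hΔ).rangeRestrict.comp e.toMonoidHom,
      ((alpha hΔ).rangeRestrict_surjective).comp e.surjective⟩
  · exact ⟨(beta hΔ).rangeRestrict.comp e.toMonoidHom,
      ((beta hΔ).rangeRestrict_surjective).comp e.surjective⟩
  · rw [← Subgroup.mul_normal A Inn, ← Subgroup.mul_normal B Inn, hsup]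
end

section
/- Assume N has trivial center and P ≤ Aut(N) contains Inn(N). If P = AB is an exact factorization by subgroups A, B with A·Inn(N) = B·Inn(N) and A splits over A ∩ Inn(N), then there is a semidirect product G = (A ∩ Inn(N)) ⋊_α B of the same order as N such that (G, N) is realizable. -/
open Pointwise

/-- Conjugation by an element `u` normalizing a subgroup `K`, as an automorphism of `K`. -/
def conjOn {M : Type*} [Group M] (K : Subgroup M) (u : M)
    (h : ∀ x ∈ K, u * x * u⁻¹ ∈ K) (h' : ∀ x ∈ K, u⁻¹ * x * u ∈ K) : MulAut K where
  toFun x := ⟨u * x * u⁻¹, h x x.2⟩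
  invFun x := ⟨u⁻¹ * (x : M) * u, h' x x.2⟩
  left_inv x := by ext; simp [mul_assoc]
  right_inv x := by ext; simp [mul_assoc]
  map_mul' x y := by ext; simp [mul_assoc]

@[simp] lemma conjOn_apply {M : Type*} [Group M] (K : Subgroup M) (u : M)
    (h : ∀ x ∈ K, u * x * u⁻¹ ∈ K) (h' : ∀ x ∈ K, u⁻¹ * x * u ∈ K) (x : K) :
    (conjOn K u h h' x : M) = u * x * u⁻¹ := rfl

/-- A subgroup of `Perm Γ` is regular as soon as evaluation at `1` is bijective. -/
lemma isRegularSubgroup_of_pt {Γ : Type*} [Group Γ] (Δ : Subgroup (Equiv.Perm Γ))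
    (h1 : ∀ z : Γ, ∃ δ ∈ Δ, δ 1 = z) (h2 : ∀ δ ∈ Δ, δ 1 = 1 → δ = 1) :
    IsRegularSubgroup Δ := by
  constructor
  · intro x y
    obtain ⟨δ₁, hδ₁, e₁⟩ := h1 x
    obtain ⟨δ₂, hδ₂, e₂⟩ := h1 y
    refine ⟨δ₂ * δ₁⁻¹, mul_mem hδ₂ (inv_mem hδ₁), ?_⟩
    have hx1 : δ₁⁻¹ x = 1 := by rw [← e₁]; exact δ₁.symm_apply_apply 1
    simp [Equiv.Perm.mul_apply, hx1, e₂]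
  · intro δ hδ hne x hx
    obtain ⟨δ₁, hδ₁, e₁⟩ := h1 x
    have hx1 : δ₁⁻¹ x = 1 := by rw [← e₁]; exact δ₁.symm_apply_apply 1
    have hmem : δ₁⁻¹ * δ * δ₁ ∈ Δ := mul_mem (mul_mem (inv_mem hδ₁) hδ) hδ₁
    have h11 : (δ₁⁻¹ * δ * δ₁) 1 = 1 := by
      simp [Equiv.Perm.mul_apply, e₁, hx, hx1]
    have hone := h2 _ hmem h11
    apply hne
    have h3 : δ * δ₁ = δ₁ := by
      have h' : δ₁ * (δ₁⁻¹ * δ * δ₁) = δ₁ * 1 := by rw [hone]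
      group at h' ⊢
      simpa using h'
    calc δ = δ * δ₁ * δ₁⁻¹ := by group
      _ = δ₁ * δ₁⁻¹ := by rw [h3]
      _ = 1 := by group

/-- If `N` has trivial center, `Inn(N) ≤ P ≤ Aut(N)`, and `P = AB` is an exact
factorization with `A·Inn(N) = B·Inn(N)` and `A` splitting over `A ∩ Inn(N)`, then
for a suitable action `α` the semidirect product `(A ∩ Inn(N)) ⋊[α] B` has the same
order as `N` and the pair `((A ∩ Inn(N)) ⋊[α] B, N)` is realizable. -/
theorem stmt9 {N : Type*} [Group N] [Finite N]
    (hZ : Subgroup.center N = ⊥)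
    (P A B : Subgroup (MulAut N))
    (hInnP : (MulAut.conj : N →* MulAut N).range ≤ P)
    (hA : A ≤ P) (hB : B ≤ P)
    (hfact : (P : Set (MulAut N)) = (A : Set (MulAut N)) * (B : Set (MulAut N)))
    (hexact : A ⊓ B = ⊥)
    (hAB : (A : Set (MulAut N)) *
        ((MulAut.conj : N →* MulAut N).range : Set (MulAut N)) =
      (B : Set (MulAut N)) *
        ((MulAut.conj : N →* MulAut N).range : Set (MulAut N)))
    (hsplit : ∃ C : Subgroup A,
      Subgroup.IsComplement' ((A ⊓ (MulAut.conj : N →* MulAut N).range).subgroupOf A) C) :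
    ∃ α : B →* MulAut (A ⊓ (MulAut.conj : N →* MulAut N).range : Subgroup (MulAut N)),
      Nat.card ((A ⊓ (MulAut.conj : N →* MulAut N).range : Subgroup (MulAut N)) ⋊[α] B) =
        Nat.card N ∧
      Realizable ((A ⊓ (MulAut.conj : N →* MulAut N).range : Subgroup (MulAut N)) ⋊[α] B)
        N := by
  classical
  obtain ⟨C, hC⟩ := hsplit
  set I : Subgroup (MulAut N) := (MulAut.conj : N →* MulAut N).range with hIdef
  set K : Subgroup (MulAut N) := A ⊓ I with hKdef
  -- conj is injective since the center is trivial
  have conj_inj : Function.Injective (MulAut.conj : N →* MulAut N) := by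
    intro a b h
    have key : ∀ g : N, a * g * a⁻¹ = b * g * b⁻¹ := by
      intro g
      have := congrArg (fun φ : MulAut N => φ g) h
      simpa [MulAut.conj_apply] using this
    have hab : b⁻¹ * a ∈ Subgroup.center N := by
      rw [Subgroup.mem_center_iff]
      intro g
      have h1 := key g
      have h2 : b⁻¹ * (a * g * a⁻¹) * b = g := by rw [h1]; group
      have h3 := congrArg (fun t => t * (b⁻¹ * a)) h2
      calc g * (b⁻¹ * a) = b⁻¹ * (a * g * a⁻¹) * b * (b⁻¹ * a) := by rw [h2]
        _ = (b⁻¹ * a) * g := by group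
    rw [hZ, Subgroup.mem_bot, inv_mul_eq_one] at hab
    exact hab.symm
  have map_conj : ∀ (φ : MulAut N) (m : N),
      MulAut.conj (φ m) = φ * MulAut.conj m * φ⁻¹ := by
    intro φ m
    ext x
    simp [MulAut.conj_apply, mul_assoc]
  -- the complement `C` pushed into `MulAut N`
  set C' : Subgroup (MulAut N) := C.map A.subtype with hC'def
  have hC'A : C' ≤ A := by
    rintro _ ⟨c, _, rfl⟩
    exact c.2
  have hC'I : ∀ c ∈ C', c ∈ I → c = 1 := by
    rintro _ ⟨c, hc, rfl⟩ hI2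
    have hK' : c ∈ K.subgroupOf A := by
      rw [Subgroup.mem_subgroupOf]
      exact Subgroup.mem_inf.mpr ⟨c.2, hI2⟩
    have hbot : c ∈ (⊥ : Subgroup A) := hC.disjoint.le_bot ⟨hK', hc⟩
    rw [Subgroup.mem_bot] at hbot
    rw [hbot]
    exact map_one _
  -- decomposition of elements of `A`
  have hAdec : ∀ a ∈ A, ∃ m c, c ∈ C' ∧ a = MulAut.conj m * c := by
    intro a ha
    obtain ⟨⟨x, y⟩, hxy⟩ := hC.2 ⟨a, ha⟩
    have hx : ((x : A) : MulAut N) ∈ K := Subgroup.mem_subgroupOf.mp x.2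
    obtain ⟨m, hm⟩ := hx.2
    refine ⟨m, ((y : A) : MulAut N), ⟨(y : A), y.2, rfl⟩, ?_⟩
    have hcoe : ((x : A) : MulAut N) * ((y : A) : MulAut N) = a := by
      have := congrArg ((↑) : A → MulAut N) hxy
      push_cast at this
      exact this
    rw [← hcoe, hm]
  -- decomposition of elements of `B`
  have hBdec : ∀ b : B, ∃ m c, c ∈ C' ∧ (b : MulAut N) = MulAut.conj m * c := by
    intro b
    have hb : (b : MulAut N) ∈ (B : Set (MulAut N)) * (I : Set (MulAut N)) :=
      ⟨b, b.2, 1, one_mem I, mul_one _⟩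
    rw [← hAB] at hb
    obtain ⟨a, ha, i, hi, hai⟩ := hb
    obtain ⟨m₀, hm₀⟩ := hi
    obtain ⟨n, c, hcC', hac⟩ := hAdec a ha
    refine ⟨n * c m₀, c, hcC', ?_⟩
    rw [map_mul, map_conj c m₀, ← hai, hac, ← hm₀]
    group
  choose μ cm hcmC' hb_eq using hBdec
  have hcmA : ∀ b : B, cm b ∈ A := fun b => hC'A (hcmC' b)
  -- uniqueness of such decompositions
  have huniq : ∀ (m : N) (c : MulAut N) (m' : N) (c' : MulAut N), c ∈ C' → c' ∈ C' →
      MulAut.conj m * c = MulAut.conj m' * c' → m = m' ∧ c = c' := by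
    intro m c m' c' hc hc' h
    have key : MulAut.conj (m'⁻¹ * m) = c' * c⁻¹ := by
      calc MulAut.conj (m'⁻¹ * m) = (MulAut.conj m')⁻¹ * MulAut.conj m := by
            rw [map_mul, map_inv]
        _ = (MulAut.conj m')⁻¹ * ((MulAut.conj m' * c') * c⁻¹) := by rw [← h]; group
        _ = c' * c⁻¹ := by group
    have hcc : c' * c⁻¹ = 1 := hC'I _ (mul_mem hc' (inv_mem hc)) ⟨m'⁻¹ * m, key⟩
    constructor
    · have h1 : MulAut.conj (m'⁻¹ * m) = MulAut.conj (1 : N) := by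
        rw [key, hcc, map_one]
      have h2 : m'⁻¹ * m = 1 := conj_inj h1
      rw [inv_mul_eq_one] at h2
      exact h2.symm
    · exact (mul_inv_eq_one.mp hcc).symm
  -- multiplicativity of the decomposition maps
  have bmul_eq : ∀ b₁ b₂ : B, (((b₁ * b₂ : B)) : MulAut N)
      = MulAut.conj (μ b₁ * cm b₁ (μ b₂)) * (cm b₁ * cm b₂) := by
    intro b₁ b₂
    push_cast
    rw [hb_eq b₁, hb_eq b₂, map_mul, map_conj (cm b₁) (μ b₂)]
    group
  have cm_mul : ∀ b₁ b₂ : B, cm (b₁ * b₂) = cm b₁ * cm b₂ := fun b₁ b₂ =>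
    (huniq _ _ _ _ (hcmC' _) (mul_mem (hcmC' b₁) (hcmC' b₂))
      ((hb_eq (b₁ * b₂)).symm.trans (bmul_eq b₁ b₂))).2
  have μ_mul : ∀ b₁ b₂ : B, μ (b₁ * b₂) = μ b₁ * cm b₁ (μ b₂) := fun b₁ b₂ =>
    (huniq _ _ _ _ (hcmC' _) (mul_mem (hcmC' b₁) (hcmC' b₂))
      ((hb_eq (b₁ * b₂)).symm.trans (bmul_eq b₁ b₂))).1
  -- the inverse of `conj` on `K`
  have hKI : ∀ k : K, ∃ n, MulAut.conj n = (k : MulAut N) := fun k => k.2.2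
  choose ν hν using hKI
  -- `A` normalizes `K`
  have hnorm : ∀ u ∈ A, ∀ x ∈ K, u * x * u⁻¹ ∈ K := by
    intro u hu x hx
    refine Subgroup.mem_inf.mpr ⟨mul_mem (mul_mem hu hx.1) (inv_mem hu), ?_⟩
    obtain ⟨n, hn⟩ := hx.2
    exact ⟨u n, by rw [map_conj u n, hn]⟩
  -- the action `α`
  let α : B →* MulAut K := MonoidHom.mk'
    (fun b => conjOn K (cm b) (hnorm _ (hcmA b))
      (fun x hx => by
        have h := hnorm _ (inv_mem (hcmA b)) x hx
        simpa using h))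
    (by
      intro b₁ b₂
      apply MulEquiv.ext
      intro k
      apply Subtype.ext
      show cm (b₁ * b₂) * (k : MulAut N) * (cm (b₁ * b₂))⁻¹
          = cm b₁ * (cm b₂ * (k : MulAut N) * (cm b₂)⁻¹) * (cm b₁)⁻¹
      rw [cm_mul]
      group)
  have hα : ∀ (b : B) (k : K), ((α b k : K) : MulAut N) = cm b * k * (cm b)⁻¹ :=
    fun b k => rfl
  -- `ν` is compatible with `α`
  have ν_mul : ∀ (b₁ : B) (k₁ k₂ : K), ν (k₁ * α b₁ k₂) = ν k₁ * cm b₁ (ν k₂) := by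
    intro b₁ k₁ k₂
    apply conj_inj
    rw [hν, map_mul, hν, map_conj (cm b₁) (ν k₂), hν]
    push_cast
    rw [hα]
  -- the embedding into `Perm N`
  let f : (K ⋊[α] B) → Equiv.Perm N := fun g =>
    rho N (ν g.left * (μ g.right)⁻¹) * MulAut.toPerm (M := N) (g.right : MulAut N)
  have fval : ∀ (g : K ⋊[α] B) (x : N),
      f g x = ((g.right : MulAut N)) x * μ g.right * (ν g.left)⁻¹ := by
    intro g x
    show ((g.right : MulAut N)) x * (ν g.left * (μ g.right)⁻¹)⁻¹
        = ((g.right : MulAut N)) x * μ g.right * (ν g.left)⁻¹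
    group
  have happ : ∀ (b : B) (y : N), (b : MulAut N) y = μ b * cm b y * (μ b)⁻¹ := by
    intro b y
    conv_lhs => rw [hb_eq b]
    simp [MulAut.conj_apply]
  have fmul : ∀ g₁ g₂ : K ⋊[α] B, f (g₁ * g₂) = f g₁ * f g₂ := by
    intro g₁ g₂
    apply Equiv.ext
    intro x
    rw [fval, Equiv.Perm.mul_apply, fval, fval, SemidirectProduct.mul_right,
      SemidirectProduct.mul_left, μ_mul, ν_mul]
    push_cast
    rw [MulAut.mul_apply, happ g₁.right, happ g₁.right]
    simp only [map_mul, map_inv]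
    group
  let F : (K ⋊[α] B) →* Equiv.Perm N := MonoidHom.mk' f fmul
  have ev : ∀ g : K ⋊[α] B, F g 1 = μ g.right * (ν g.left)⁻¹ := by
    intro g
    show f g 1 = _
    rw [fval]
    simp
  have conj_μ : ∀ b : B, MulAut.conj (μ b) = (b : MulAut N) * (cm b)⁻¹ := by
    intro b
    rw [hb_eq b]
    group
  -- evaluation at `1` is injective
  have evinj : ∀ g g' : K ⋊[α] B, F g 1 = F g' 1 → g = g' := by
    intro g g' h
    rw [ev, ev] at h
    have h2 : ((g.right : MulAut N) * (cm g.right)⁻¹) * ((g.left : MulAut N))⁻¹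
        = ((g'.right : MulAut N) * (cm g'.right)⁻¹) * ((g'.left : MulAut N))⁻¹ := by
      have h1 := congrArg (MulAut.conj : N →* MulAut N) h
      rwa [map_mul, map_inv, map_mul, map_inv, hν, hν, conj_μ, conj_μ] at h1
    have hb' : (g.right : MulAut N) = ((g'.right : MulAut N) * (cm g'.right)⁻¹
        * ((g'.left : MulAut N))⁻¹) * ((g.left : MulAut N) * cm g.right) := by
      rw [← h2]; group
    have h3 : ((g'.right : MulAut N))⁻¹ * (g.right : MulAut N)
        = ((cm g'.right)⁻¹ * ((g'.left : MulAut N))⁻¹)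
          * ((g.left : MulAut N) * cm g.right) := by
      rw [hb']; group
    have huA : ((g'.right : MulAut N))⁻¹ * (g.right : MulAut N) ∈ A := by
      rw [h3]
      exact mul_mem (mul_mem (inv_mem (hcmA _)) (inv_mem g'.left.2.1))
        (mul_mem g.left.2.1 (hcmA _))
    have huB : ((g'.right : MulAut N))⁻¹ * (g.right : MulAut N) ∈ B :=
      mul_mem (inv_mem g'.right.2) g.right.2
    have hu1 : ((g'.right : MulAut N))⁻¹ * (g.right : MulAut N) = 1 := by
      have hm : ((g'.right : MulAut N))⁻¹ * (g.right : MulAut N) ∈ A ⊓ B :=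
        Subgroup.mem_inf.mpr ⟨huA, huB⟩
      rwa [hexact, Subgroup.mem_bot] at hm
    have hbr : g.right = g'.right := by
      apply Subtype.ext
      rw [inv_mul_eq_one] at hu1
      exact hu1.symm
    have hkl : g.left = g'.left := by
      apply Subtype.ext
      rw [hbr] at h2
      have := mul_left_cancel h2
      exact inv_injective this
    exact SemidirectProduct.ext hkl hbr
  -- evaluation at `1` is surjective
  have evsurj : ∀ z : N, ∃ g : K ⋊[α] B, F g 1 = z := by
    intro z
    have hz : MulAut.conj z⁻¹ ∈ (A : Set (MulAut N)) * (B : Set (MulAut N)) := by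
      rw [← hfact]
      exact hInnP ⟨z⁻¹, rfl⟩
    obtain ⟨a, ha, b₀, hb₀, hab⟩ := hz
    set b : B := (⟨b₀, hb₀⟩ : B)⁻¹ with hbdef
    have hkA : MulAut.conj (z⁻¹ * μ b) ∈ A := by
      have h1 : MulAut.conj (z⁻¹ * μ b) = a * (cm b)⁻¹ := by
        rw [map_mul, conj_μ, ← hab, hbdef]
        push_cast
        group
      rw [h1]
      exact mul_mem ha (inv_mem (hcmA b))
    have hkK : MulAut.conj (z⁻¹ * μ b) ∈ K :=
      Subgroup.mem_inf.mpr ⟨hkA, ⟨z⁻¹ * μ b, rfl⟩⟩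
    refine ⟨⟨⟨MulAut.conj (z⁻¹ * μ b), hkK⟩, b⟩, ?_⟩
    rw [ev]
    have hνk : ν ⟨MulAut.conj (z⁻¹ * μ b), hkK⟩ = z⁻¹ * μ b := by
      apply conj_inj
      rw [hν]
    show μ b * (ν ⟨MulAut.conj (z⁻¹ * μ b), hkK⟩)⁻¹ = z
    rw [hνk]
    group
  have evbij : Function.Bijective (fun g : K ⋊[α] B => F g 1) :=
    ⟨fun g g' h => evinj g g' h, fun z => evsurj z⟩
  have Finj : Function.Injective F := fun g g' h => evinj g g' (by rw [h])
  refine ⟨α, Nat.card_eq_of_bijective _ evbij, F.range, ?_, ?_, ⟨MonoidHom.ofInjective Finj⟩⟩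
  · rintro _ ⟨g, rfl⟩
    show rho N (ν g.left * (μ g.right)⁻¹) * MulAut.toPerm (M := N) (g.right : MulAut N) ∈ Hol N
    exact mul_mem
      (Subgroup.subset_closure (Or.inl ⟨ν g.left * (μ g.right)⁻¹, rfl⟩))
      (Subgroup.subset_closure (Or.inr ⟨(g.right : MulAut N), rfl⟩))
  · apply isRegularSubgroup_of_pt
    · intro z
      obtain ⟨g, hg⟩ := evsurj z
      exact ⟨F g, ⟨g, rfl⟩, hg⟩
    · rintro _ ⟨g, rfl⟩ h1
      have : g = 1 := evinj g 1 (by rw [h1, F.map_one]; rfl)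
      rw [this, F.map_one]
end

section
/- Let q > 1 be a prime power. Then PGL₂(F_q) admits an exact factorization PGL₂(F_q) = AB with A ∩ B = 1, where A is a cyclic subgroup of order q + 1 (image of a Singer cycle) and B is the image of the upper triangular matrices, of order q(q−1). -/
/-- `PGL₂(F) = GL₂(F)/Z`, the quotient by the center (scalar matrices). -/
abbrev PGL2 (F : Type*) [Field F] :=
  GL (Fin 2) F ⧸ Subgroup.center (GL (Fin 2) F)


open Matrix Polynomial

namespace Stmt16Aux

variable {F : Type*} [Field F]

lemma mem_center_GL2_iff (M : GL (Fin 2) F) :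
    M ∈ Subgroup.center (GL (Fin 2) F) ↔ ∃ c : F, (M : Matrix (Fin 2) (Fin 2) F) = c • 1 := by
  constructor
  · intro hM
    have h := Subgroup.mem_center_iff.mp hM
    have hc : ∀ t : TransvectionStruct (Fin 2) F,
        Commute t.toMatrix (M : Matrix (Fin 2) (Fin 2) F) := by
      intro t
      have := h ⟨t.toMatrix, t.inv.toMatrix, t.mul_inv, t.inv_mul⟩
      exact congrArg Units.val this
    obtain ⟨c, hc⟩ := Matrix.mem_range_scalar_of_commute_transvectionStruct hc
    exact ⟨c, by rw [← hc]; simp [Matrix.scalar_apply, Matrix.smul_one_eq_diagonal]⟩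
  · rintro ⟨c, hc⟩
    rw [Subgroup.mem_center_iff]
    intro g
    refine Units.ext ?_
    simp only [Units.val_mul, hc]
    simp [Matrix.mul_smul, Matrix.smul_mul]

end Stmt16Aux

namespace Stmt16Aux

variable {F : Type*} [Field F]

/-- Upper triangular invertible matrices. -/
def Btil (F : Type*) [Field F] : Subgroup (GL (Fin 2) F) where
  carrier := {M : GL (Fin 2) F | (M : Matrix (Fin 2) (Fin 2) F) 1 0 = 0}
  one_mem' := by simp
  mul_mem' := by
    intro a b ha hb
    simp only [Set.mem_setOf_eq, Units.val_mul, Matrix.mul_apply, Fin.sum_univ_two] at *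
    rw [ha, hb]; ring
  inv_mem' := by
    intro a ha
    simp only [Set.mem_setOf_eq] at *
    have h1 : (↑a⁻¹ : Matrix (Fin 2) (Fin 2) F) = (↑a : Matrix (Fin 2) (Fin 2) F)⁻¹ := by
      simp [Matrix.coe_units_inv]
    rw [h1, Matrix.inv_def, Matrix.adjugate_fin_two]
    simp [ha]

lemma center_le_Btil : Subgroup.center (GL (Fin 2) F) ≤ Btil F := by
  intro M hM
  obtain ⟨c, hc⟩ := (mem_center_GL2_iff M).mp hM
  show (M : Matrix (Fin 2) (Fin 2) F) 1 0 = 0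
  rw [hc]
  simp [Matrix.one_apply]

end Stmt16Aux

namespace Stmt16Aux

variable {F : Type*} [Field F]

noncomputable def mkBtil (a d : Fˣ) (b : F) : Btil F := by
  refine ⟨((Matrix.isUnit_iff_isUnit_det !![(a:F), b; 0, (d:F)]).mpr ?_).unit, ?_⟩
  · rw [Matrix.det_fin_two]
    simp
  · show (_ : Matrix (Fin 2) (Fin 2) F) 1 0 = 0
    rw [IsUnit.unit_spec]
    simp

lemma mkBtil_coe (a d : Fˣ) (b : F) :
    ((mkBtil a d b : GL (Fin 2) F) : Matrix (Fin 2) (Fin 2) F) = !![(a:F), b; 0, (d:F)] :=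
  IsUnit.unit_spec _

lemma mkBtil_bijective :
    Function.Bijective (fun x : Fˣ × Fˣ × F => mkBtil (F := F) x.1 x.2.1 x.2.2) := by
  constructor
  · rintro ⟨a, d, b⟩ ⟨a', d', b'⟩ h
    have h2 : (!![(a:F), b; 0, (d:F)] : Matrix (Fin 2) (Fin 2) F) = !![(a':F), b'; 0, (d':F)] := by
      rw [← mkBtil_coe a d b, ← mkBtil_coe a' d' b']
      exact congrArg (fun z : Btil F => ((z : GL (Fin 2) F) : Matrix (Fin 2) (Fin 2) F)) h
    have ha : (a : F) = a' := by simpa using congrFun (congrFun h2 0) 0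
    have hb : b = b' := by simpa using congrFun (congrFun h2 0) 1
    have hd : (d : F) = d' := by simpa using congrFun (congrFun h2 1) 1
    ext <;> simp [ha, hb, hd]
  · rintro ⟨M, hM⟩
    have hM' : (M : Matrix (Fin 2) (Fin 2) F) 1 0 = 0 := hM
    have hdet : IsUnit ((M : Matrix (Fin 2) (Fin 2) F).det) :=
      (Matrix.isUnit_iff_isUnit_det _).mp M.isUnit
    rw [Matrix.det_fin_two, hM', mul_zero, sub_zero] at hdet
    have ha : IsUnit ((M : Matrix (Fin 2) (Fin 2) F) 0 0) := isUnit_of_mul_isUnit_left hdet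
    have hd : IsUnit ((M : Matrix (Fin 2) (Fin 2) F) 1 1) := isUnit_of_mul_isUnit_right hdet
    refine ⟨⟨ha.unit, hd.unit, (M : Matrix (Fin 2) (Fin 2) F) 0 1⟩, ?_⟩
    apply Subtype.ext
    apply Units.ext
    rw [mkBtil_coe]
    ext i j
    fin_cases i <;> fin_cases j <;> simp [hM', ha.unit_spec, hd.unit_spec]

lemma card_Btil [Fintype F] :
    Nat.card (Btil F) =
      (Fintype.card F * (Fintype.card F - 1)) * (Fintype.card F - 1) := by
  have := Nat.card_eq_of_bijective _ (mkBtil_bijective (F := F))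
  rw [← this]
  have : Nat.card (Fˣ × Fˣ × F) = (Fintype.card F - 1) * ((Fintype.card F - 1) * Fintype.card F) := by
    simp [Nat.card_eq_fintype_card, Nat.card_units, Fintype.card_units]
  rw [this]; ring

end Stmt16Aux

namespace Stmt16Aux

variable {F : Type*} [Field F]

lemma exists_irreducible_quadratic [Fintype F] :
    ∃ f : F[X], f.Monic ∧ f.natDegree = 2 ∧ Irreducible f := by
  classical
  set ψ : F × F → F × F := fun p => (p.1 + p.2, p.1 * p.2) with hψ
  have hni : ¬ Function.Injective ψ := by
    intro h
    have : ((0 : F), (1 : F)) = ((1 : F), (0 : F)) := h (by simp [hψ])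
    simpa using congrArg Prod.fst this
  have hns : ∃ y, ∀ x, ψ x ≠ y := by
    by_contra hc
    push_neg at hc
    exact hni (Finite.injective_iff_surjective.mpr fun y => hc y)
  obtain ⟨⟨s, c⟩, hsc⟩ := hns
  set f : F[X] := X ^ 2 + C (-s) * X + C c with hf
  have hmonic : f.Monic := by
    rw [hf]; monicity!
  have hdeg : f.natDegree = 2 := by
    rw [hf]; compute_degree!
  have hroot : ∀ r : F, ¬ f.IsRoot r := by
    intro r hr
    apply hsc (r, s - r)
    show (r + (s - r), r * (s - r)) = (s, c)
    refine Prod.ext (by ring) ?_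
    have h0 : r ^ 2 + (-s) * r + c = 0 := by simpa [hf] using hr
    show r * (s - r) = c
    linear_combination -h0
  refine ⟨f, hmonic, hdeg, ?_⟩
  rw [Polynomial.irreducible_iff_roots_eq_zero_of_degree_le_three (by omega) (by omega)]
  rw [Multiset.eq_zero_iff_forall_notMem]
  intro r hr
  exact hroot r ((Polynomial.mem_roots hmonic.ne_zero).mp hr)

end Stmt16Aux

namespace Stmt16Aux

lemma card_map_quotient {G : Type*} [Group G] [Finite G] (Z H : Subgroup G) [Z.Normal]
    (hZH : Z ≤ H) :
    Nat.card (H.map (QuotientGroup.mk' Z)) * Nat.card Z = Nat.card H := by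
  set g := (QuotientGroup.mk' Z).comp H.subtype with hg
  have hrange : g.range = H.map (QuotientGroup.mk' Z) := by
    rw [hg, MonoidHom.range_comp, Subgroup.range_subtype]
  have hker : g.ker = Z.subgroupOf H := by
    ext x
    simp [hg, MonoidHom.mem_ker, Subgroup.mem_subgroupOf, QuotientGroup.eq_one_iff]
  have h1 : Nat.card H = Nat.card (H ⧸ g.ker) * Nat.card g.ker :=
    Subgroup.card_eq_card_quotient_mul_card_subgroup g.ker
  have h2 : Nat.card (H ⧸ g.ker) = Nat.card g.range :=
    Nat.card_congr (QuotientGroup.quotientKerEquivRange g).toEquiv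
  have h3 : Nat.card g.ker = Nat.card Z := by
    rw [hker]; exact Nat.card_congr (Subgroup.subgroupOfEquivOfLe hZH).toEquiv
  rw [← hrange, ← h3, ← h2, ← h1]

variable {F : Type*} [Field F] {K : Type*} [Field K] [Algebra F K]

lemma upper_tri_scalar (b : Module.Basis (Fin 2) F K) (hb0 : b 0 = 1) (x : K)
    (h : Algebra.leftMulMatrix b x 1 0 = 0) : ∃ c : F, x = algebraMap F K c := by
  refine ⟨Algebra.leftMulMatrix b x 0 0, ?_⟩
  have hx : x = ∑ i, b.repr x i • b i := (b.sum_repr x).symm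
  have hrepr : ∀ i, b.repr x i = Algebra.leftMulMatrix b x i 0 := by
    intro i; rw [Algebra.leftMulMatrix_eq_repr_mul, hb0, mul_one]
  rw [Fin.sum_univ_two, hrepr 0, hrepr 1, h, zero_smul, add_zero, hb0] at hx
  rw [Algebra.algebraMap_eq_smul_one]
  exact hx

lemma col_eq (b : Module.Basis (Fin 2) F K) (hb0 : b 0 = 1) (v : Fin 2 → F) (i : Fin 2) :
    Algebra.leftMulMatrix b (∑ j, v j • b j) i 0 = v i := by
  rw [Algebra.leftMulMatrix_eq_repr_mul, hb0, mul_one]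
  simp only [map_sum, _root_.map_smul, Module.Basis.repr_self]
  fin_cases i <;>
    simp [Fin.sum_univ_two, Finsupp.single_apply]

end Stmt16Aux

open Stmt16Aux in
/-- For a finite field `F_q` (`q > 1` automatic), `PGL₂(F_q)` admits an exact
factorization `PGL₂(F_q) = AB` with `A ∩ B = 1`, where `A` is cyclic of order
`q + 1` (the image of a Singer cycle) and `B` is the image of the invertible upper
triangular matrices, of order `q(q − 1)`. -/
theorem stmt16 {F : Type*} [Field F] [Fintype F] (q : ℕ) (hq : q = Fintype.card F) :
    ∃ A B : Subgroup (PGL2 F),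
      (∀ p : PGL2 F, ∃ a ∈ A, ∃ b ∈ B, p = a * b) ∧
      A ⊓ B = ⊥ ∧
      IsCyclic A ∧ Nat.card A = q + 1 ∧
      (∃ Atil : Subgroup (GL (Fin 2) F), IsCyclic Atil ∧ Nat.card Atil = q ^ 2 - 1 ∧
        A = Atil.map (QuotientGroup.mk' (Subgroup.center (GL (Fin 2) F)))) ∧
      Nat.card B = q * (q - 1) ∧
      (B : Set (PGL2 F)) =
        (QuotientGroup.mk' (Subgroup.center (GL (Fin 2) F))) ''
          {M : GL (Fin 2) F | (M : Matrix (Fin 2) (Fin 2) F) 1 0 = 0} := by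
  classical
  have hc2 : 2 ≤ Fintype.card F := Fintype.one_lt_card
  -- the quadratic extension K / F
  obtain ⟨f, hmonic, hdeg, hirr⟩ := exists_irreducible_quadratic (F := F)
  haveI := Fact.mk hirr
  set K := AdjoinRoot f with hK
  let pb : PowerBasis F K := AdjoinRoot.powerBasis hmonic.ne_zero
  have hdim : pb.dim = 2 := by
    show (AdjoinRoot.powerBasis hmonic.ne_zero).dim = 2
    rw [AdjoinRoot.powerBasis_dim]
    exact hdeg
  let b : Module.Basis (Fin 2) F K := pb.basis.reindex (finCongr hdim)
  have hb0 : b 0 = 1 := by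
    have : b 0 = pb.gen ^ (((finCongr hdim).symm 0 : Fin pb.dim) : ℕ) := by
      rw [Module.Basis.reindex_apply, PowerBasis.basis_eq_pow]
    rw [this]
    norm_num
  haveI : Finite K := Finite.of_equiv _ b.equivFun.toEquiv.symm
  haveI : Fintype K := Fintype.ofFinite K
  have hcardK : Fintype.card K = Fintype.card F ^ 2 := by
    rw [← Nat.card_eq_fintype_card, Nat.card_congr b.equivFun.toEquiv]
    simp [Nat.card_eq_fintype_card]
  -- the Singer embedding
  set φ : K →ₐ[F] Matrix (Fin 2) (Fin 2) F := Algebra.leftMulMatrix b with hφ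
  have hφinj : Function.Injective φ := Algebra.leftMulMatrix_injective b
  set e : Kˣ →* GL (Fin 2) F := Units.map (φ : K →* Matrix (Fin 2) (Fin 2) F) with he
  have heinj : Function.Injective e := Units.map_injective hφinj
  set Z := Subgroup.center (GL (Fin 2) F) with hZ
  set mk := QuotientGroup.mk' Z with hmk
  set Atil : Subgroup (GL (Fin 2) F) := e.range with hAtil
  -- scalars
  set ι : Fˣ →* GL (Fin 2) F := e.comp (Units.map (algebraMap F K).toMonoidHom) with hι
  have hιval : ∀ c : Fˣ, ((ι c : GL (Fin 2) F) : Matrix (Fin 2) (Fin 2) F) = (c : F) • 1 := by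
    intro c
    show (φ (algebraMap F K (c : F)) : Matrix (Fin 2) (Fin 2) F) = (c : F) • 1
    rw [φ.commutes, Algebra.algebraMap_eq_smul_one]
  have hcentral : ∀ M : GL (Fin 2) F, M ∈ Z → ∃ c : Fˣ, ι c = M := by
    intro M hM
    obtain ⟨c, hc⟩ := (mem_center_GL2_iff M).mp hM
    have hc0 : c ≠ 0 := by
      rintro rfl
      have hdet := (Matrix.isUnit_iff_isUnit_det _).mp M.isUnit
      rw [hc] at hdet
      simp at hdet
    refine ⟨Units.mk0 c hc0, Units.ext ?_⟩
    rw [hιval, hc]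
    rfl
  have hZrange : Z = ι.range := by
    ext M
    constructor
    · intro hM
      obtain ⟨c, hc⟩ := hcentral M hM
      exact ⟨c, hc⟩
    · rintro ⟨c, rfl⟩
      exact (mem_center_GL2_iff _).mpr ⟨c, hιval c⟩
  have hZle : Z ≤ Atil := by
    rw [hZrange]
    rintro M ⟨c, rfl⟩
    exact ⟨Units.map (algebraMap F K).toMonoidHom c, rfl⟩
  have hιinj : Function.Injective ι :=
    heinj.comp (Units.map_injective (algebraMap F K).injective)
  have hcardZ : Nat.card Z = Fintype.card F - 1 := by
    rw [hZrange, ← Nat.card_congr (MonoidHom.ofInjective hιinj).toEquiv]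
    simp [Nat.card_eq_fintype_card, Fintype.card_units]
  have hcardAtil : Nat.card Atil = Fintype.card F ^ 2 - 1 := by
    rw [hAtil, ← Nat.card_congr (MonoidHom.ofInjective heinj).toEquiv]
    simp [Nat.card_eq_fintype_card, Fintype.card_units, hcardK]
    rw [← Nat.card_eq_fintype_card, show Nat.card Kˣ = Nat.card K - 1 from Nat.card_units K,
      Nat.card_eq_fintype_card, hcardK]
  have hAcyc : IsCyclic Atil :=
    isCyclic_of_surjective e.rangeRestrict e.rangeRestrict_surjective
  -- intersection of the Singer cycle with the Borel is central
  have hABZ : Atil ⊓ Btil F ≤ Z := by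
    rintro M ⟨hMA, hMB⟩
    obtain ⟨x, rfl⟩ := hMA
    obtain ⟨c, hc⟩ := upper_tri_scalar b hb0 x.val hMB
    refine (mem_center_GL2_iff _).mpr ⟨c, ?_⟩
    show (φ x.val : Matrix (Fin 2) (Fin 2) F) = c • 1
    rw [hc, φ.commutes, Algebra.algebraMap_eq_smul_one]
  -- the two subgroups
  refine ⟨Atil.map mk, (Btil F).map mk, ?_, ?_, ?_, ?_, ⟨Atil, hAcyc, by rw [hcardAtil, hq], rfl⟩,
    ?_, ?_⟩
  · -- exact factorization
    intro p
    obtain ⟨M, rfl⟩ := QuotientGroup.mk'_surjective Z p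
    set v : Fin 2 → F := fun i => (M : Matrix (Fin 2) (Fin 2) F) i 0 with hv
    set x : K := ∑ j, v j • b j with hx
    have hcol : ∀ i, (φ x : Matrix (Fin 2) (Fin 2) F) i 0 = v i := fun i => col_eq b hb0 v i
    have hx0 : x ≠ 0 := by
      intro h0
      have hv0 : ∀ i, v i = 0 := by
        intro i
        have h1 := hcol i
        rw [h0, map_zero] at h1
        simpa using h1.symm
      have hdet := (Matrix.isUnit_iff_isUnit_det (M : Matrix (Fin 2) (Fin 2) F)).mp M.isUnit
      rw [Matrix.det_fin_two] at hdet
      rw [show (M : Matrix (Fin 2) (Fin 2) F) 0 0 = v 0 from rfl,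
        show (M : Matrix (Fin 2) (Fin 2) F) 1 0 = v 1 from rfl, hv0 0, hv0 1] at hdet
      simp at hdet
    have hxu : IsUnit x := isUnit_iff_ne_zero.mpr hx0
    have hval : ((e hxu.unit : GL (Fin 2) F) : Matrix (Fin 2) (Fin 2) F) = φ x := by
      show (φ hxu.unit.val : Matrix (Fin 2) (Fin 2) F) = φ x
      rw [hxu.unit_spec]
    have hinv : (((e hxu.unit)⁻¹ : GL (Fin 2) F) : Matrix (Fin 2) (Fin 2) F) * (φ x) = 1 := by
      rw [← hval]
      exact Units.inv_mul _
    refine ⟨mk (e hxu.unit), Subgroup.mem_map_of_mem mk ⟨hxu.unit, rfl⟩,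
      mk ((e hxu.unit)⁻¹ * M), Subgroup.mem_map_of_mem mk ?_, ?_⟩
    · show ((((e hxu.unit)⁻¹ * M : GL (Fin 2) F)) : Matrix (Fin 2) (Fin 2) F) 1 0 = 0
      rw [Units.val_mul, Matrix.mul_apply, Fin.sum_univ_two,
        show (M : Matrix (Fin 2) (Fin 2) F) 0 0 = (φ x : Matrix (Fin 2) (Fin 2) F) 0 0 from
          (hcol 0).symm,
        show (M : Matrix (Fin 2) (Fin 2) F) 1 0 = (φ x : Matrix (Fin 2) (Fin 2) F) 1 0 from
          (hcol 1).symm,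
        ← Fin.sum_univ_two
          (f := fun k => (((e hxu.unit)⁻¹ : GL (Fin 2) F) : Matrix (Fin 2) (Fin 2) F) 1 k *
            (φ x : Matrix (Fin 2) (Fin 2) F) k 0),
        ← Matrix.mul_apply, hinv]
      simp [Matrix.one_apply]
    · rw [← _root_.map_mul, mul_inv_cancel_left]
  · -- trivial intersection
    rw [eq_bot_iff]
    rintro p ⟨hpA, hpB⟩
    obtain ⟨a, ha, rfl⟩ := hpA
    obtain ⟨bb, hbmem, hmkbb⟩ := hpB
    obtain ⟨z, hz, hza⟩ := (QuotientGroup.mk'_eq_mk' Z).mp hmkbb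
    have haB : a ∈ Btil F := by
      rw [← hza]
      exact mul_mem hbmem (center_le_Btil hz)
    have haZ : a ∈ Z := hABZ ⟨ha, haB⟩
    rw [Subgroup.mem_bot]
    have : a ∈ mk.ker := by rw [hmk, QuotientGroup.ker_mk']; exact haZ
    exact this
  · -- A cyclic
    rw [hAtil, ← MonoidHom.range_comp]
    exact isCyclic_of_surjective (mk.comp e).rangeRestrict (mk.comp e).rangeRestrict_surjective
  · -- card A
    have h := card_map_quotient Z Atil hZle
    rw [hcardAtil, hcardZ] at h
    have hfact : Fintype.card F ^ 2 - 1 = (Fintype.card F + 1) * (Fintype.card F - 1) := by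
      rcases Nat.exists_eq_add_of_le hc2 with ⟨m, hm⟩
      rw [hm]
      have h2 : 2 + m - 1 = m + 1 := by omega
      have h1 : (2 + m) ^ 2 = ((2 + m + 1) * (m + 1)) + 1 := by ring
      rw [h1, h2, Nat.add_sub_cancel]
    rw [hfact] at h
    have hpos : 0 < Fintype.card F - 1 := by omega
    rw [hq]
    exact Nat.eq_of_mul_eq_mul_right hpos h
  · -- card B
    have h := card_map_quotient Z (Btil F) center_le_Btil
    rw [card_Btil, hcardZ] at h
    have hpos : 0 < Fintype.card F - 1 := by omega
    rw [hq]
    exact Nat.eq_of_mul_eq_mul_right hpos h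
  · -- B as a set
    rw [Subgroup.coe_map]
    rfl
end

section
/- For q ≡ 0 (mod 2) a prime power with q ≠ 2, the pair (A × B, PSL₂(F_q)) is realizable, where A is cyclic of order q+1 and B ≅ F_q ⋊ F_q^× has order q(q−1); in particular PSL₂(F_q) is the type of a Hopf-Galois structure on some solvable Galois extension. -/
set_option linter.unusedSectionVars false
set_option maxHeartbeats 1000000

/-- `PSL₂(F) = SL₂(F)/Z`, the quotient by the center. -/
abbrev PSL2 (F : Type*) [Field F] :=
  Matrix.SpecialLinearGroup (Fin 2) F ⧸
    Subgroup.center (Matrix.SpecialLinearGroup (Fin 2) F)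

open Matrix Polynomial

section generic
variable {G : Type*} [Group G] [Finite G]

lemma key_triv (A B : Subgroup G)
    (hcop : Nat.Coprime (Nat.card A) (Nat.card B))
    (a : A) (b : B) (x : G) (h : (a : G) = x * b * x⁻¹) : a = 1 ∧ b = 1 := by
  have h1 : orderOf (a : G) = orderOf (b : G) := by
    have hc : (a : G) = (MulAut.conj x) (b : G) := by simpa [MulAut.conj] using h
    rw [hc]
    exact orderOf_injective (MulAut.conj x).toMonoidHom (MulAut.conj x).injective _
  have h2 : orderOf (a : G) ∣ Nat.card A := by
    rw [orderOf_submonoid]; exact orderOf_dvd_natCard a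
  have h3 : orderOf (b : G) ∣ Nat.card B := by
    rw [orderOf_submonoid]; exact orderOf_dvd_natCard b
  have h4 : orderOf (a : G) = 1 :=
    Nat.eq_one_of_dvd_coprimes hcop h2 (h1 ▸ h3)
  have h5 : orderOf (b : G) = 1 := h1 ▸ h4
  exact ⟨Subtype.ext (orderOf_eq_one_iff.mp h4), Subtype.ext (orderOf_eq_one_iff.mp h5)⟩

/-- The regular embedding from an exact factorization. -/
def regEmb (A B : Subgroup G) : A × B →* Equiv.Perm G :=
  MonoidHom.mk' (fun p => Equiv.mulLeft (p.1 : G) * rho G (p.2 : G))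
    (by intro p q; ext x; simp [rho, mul_assoc])

lemma regEmb_apply (A B : Subgroup G) (p : A × B) (x : G) :
    regEmb A B p x = (p.1 : G) * x * (p.2 : G)⁻¹ := by
  simp [regEmb, rho, mul_assoc]

lemma regEmb_fix (A B : Subgroup G)
    (hcop : Nat.Coprime (Nat.card A) (Nat.card B))
    {p : A × B} {x : G} (h : regEmb A B p x = x) : p = 1 := by
  rw [regEmb_apply] at h
  have hx : (p.1 : G) = x * (p.2 : G) * x⁻¹ := by
    have h' := mul_inv_eq_iff_eq_mul.mp h
    rw [eq_mul_inv_iff_mul_eq]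
    exact h'
  obtain ⟨e1, e2⟩ := key_triv A B hcop _ _ _ hx
  exact Prod.ext e1 e2

lemma realizable_of_factorization (A B : Subgroup G)
    (hcop : Nat.Coprime (Nat.card A) (Nat.card B))
    (hcard : Nat.card A * Nat.card B = Nat.card G) :
    Realizable (A × B) G := by
  have hinj : Function.Injective (regEmb A B) := by
    intro p q hpq
    have h1 : regEmb A B (q⁻¹ * p) 1 = 1 := by
      rw [_root_.map_mul, _root_.map_inv, hpq]
      simp
    have h2 := regEmb_fix A B hcop h1
    rw [inv_mul_eq_one] at h2
    exact h2.symm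
  refine ⟨(regEmb A B).range, ?_, ⟨?_, ?_⟩, ⟨MonoidHom.ofInjective hinj⟩⟩
  · rintro δ ⟨p, rfl⟩
    have hd : regEmb A B p = Equiv.mulLeft (p.1 : G) * rho G (p.2 : G) := rfl
    rw [hd]
    refine mul_mem ?_ ?_
    · have hml : Equiv.mulLeft ((p.1 : G)) =
          MulAut.toPerm (M := G) (MulAut.conj (p.1 : G)) * rho G ((p.1 : G))⁻¹ := by
        ext x; simp [rho, MulAut.conj, MulAut.toPerm, mul_assoc]
        show (p.1 : G) * x = (p.1 : G) * ((x * (p.1 : G)) * (p.1 : G)⁻¹); group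
      rw [hml]
      exact mul_mem
        (Subgroup.subset_closure (Or.inr ⟨MulAut.conj (p.1 : G), rfl⟩))
        (Subgroup.subset_closure (Or.inl ⟨((p.1 : G))⁻¹, rfl⟩))
    · exact Subgroup.subset_closure (Or.inl ⟨(p.2 : G), rfl⟩)
  · -- transitivity
    intro x y
    set m : A × B → G := fun p => (p.1 : G) * (x * (p.2 : G)⁻¹ * x⁻¹) with hm
    have hminj : Function.Injective m := by
      intro p q hpq
      simp only [hm] at hpq
      have hk : ((q.1⁻¹ * p.1 : A) : G) = x * ((q.2⁻¹ * p.2 : B) : G) * x⁻¹ := by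
        push_cast
        calc ((q.1 : G))⁻¹ * (p.1 : G)
            = ((q.1 : G))⁻¹ * ((q.1 : G) * (x * ((q.2 : G))⁻¹ * x⁻¹))
              * (x * ((p.2 : G))⁻¹ * x⁻¹)⁻¹ := by rw [← hpq]; group
          _ = x * (((q.2 : G))⁻¹ * (p.2 : G)) * x⁻¹ := by group
      obtain ⟨e1, e2⟩ := key_triv A B hcop _ _ _ hk
      rw [inv_mul_eq_one] at e1 e2
      exact Prod.ext e1.symm e2.symm
    have hbij : Function.Bijective m := by
      rw [Nat.bijective_iff_injective_and_card]
      exact ⟨hminj, by rw [Nat.card_prod, hcard]⟩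
    obtain ⟨p, hp⟩ := hbij.2 (y * x⁻¹)
    refine ⟨regEmb A B p, ⟨p, rfl⟩, ?_⟩
    rw [regEmb_apply]
    simp only [hm] at hp
    have : (p.1 : G) * (x * ((p.2 : G))⁻¹ * x⁻¹) * x = y := by rw [hp]; group
    calc (p.1 : G) * x * ((p.2 : G))⁻¹
        = (p.1 : G) * (x * ((p.2 : G))⁻¹ * x⁻¹) * x := by group
      _ = y := this
  · -- freeness
    rintro δ ⟨p, rfl⟩ hδ x hx
    exact hδ (by rw [regEmb_fix A B hcop hx, _root_.map_one])

end generic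

abbrev SL2 (F : Type*) [Field F] := Matrix.SpecialLinearGroup (Fin 2) F

section cards
variable {F : Type*} [Field F] [Fintype F]

lemma charF (h2 : Fintype.card F % 2 = 0) : CharP F 2 := by
  obtain ⟨p, hc⟩ := CharP.exists F
  haveI := hc
  obtain ⟨n, hp, hcard⟩ := FiniteField.card F p
  have hdvd : 2 ∣ p ^ (n : ℕ) := by rw [← hcard]; omega
  have h2p : 2 ∣ p := (Nat.Prime.dvd_of_dvd_pow Nat.prime_two hdvd)
  have : p = 2 := ((Nat.prime_dvd_prime_iff_eq Nat.prime_two hp).mp h2p).symm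
  rwa [this] at hc

lemma center_bot (h2 : Fintype.card F % 2 = 0) :
    Subgroup.center (SL2 F) = ⊥ := by
  haveI := charF h2
  rw [eq_bot_iff]
  intro A hA
  obtain ⟨r, hr, hs⟩ := Matrix.SpecialLinearGroup.mem_center_iff.mp hA
  rw [Fintype.card_fin] at hr
  have : (r + 1) ^ 2 = 0 := by rw [CharTwo.add_sq, hr, one_pow, CharTwo.add_self_eq_zero]
  have hr1 : r = 1 := by
    have := pow_eq_zero_iff (n := 2) (by norm_num) |>.mp this
    have : r = -1 := by linear_combination this
    rw [this, CharTwo.neg_eq]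
  rw [Subgroup.mem_bot]
  ext i j
  have := hs
  rw [hr1] at this
  rw [← this]
  simp [Matrix.scalar]

example (h2 : Fintype.card F % 2 = 0) : True := trivial

-- card SL2
noncomputable def eSL : SL2 F ≃ (Matrix.GeneralLinearGroup.det (n := Fin 2) (R := F)).ker where
  toFun A := ⟨Matrix.SpecialLinearGroup.toGL A, by
    rw [MonoidHom.mem_ker]
    ext
    rw [Matrix.GeneralLinearGroup.val_det_apply]
    exact A.2⟩
  invFun g := ⟨(g : GL (Fin 2) F), by
    have := g.2
    rw [MonoidHom.mem_ker] at this
    have := congrArg Units.val this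
    rwa [Matrix.GeneralLinearGroup.val_det_apply] at this⟩
  left_inv A := rfl
  right_inv g := by
    apply Subtype.ext
    apply Units.ext
    rfl

lemma det_surj : Function.Surjective (Matrix.GeneralLinearGroup.det (n := Fin 2) (R := F)) := by
  intro u
  refine ⟨⟨!![(u : F), 0; 0, 1], !![((u⁻¹ : Fˣ) : F), 0; 0, 1], ?_, ?_⟩, ?_⟩
  · ext i j
    fin_cases i <;> fin_cases j <;> simp [Matrix.mul_apply, Fin.sum_univ_two]
  · ext i j
    fin_cases i <;> fin_cases j <;> simp [Matrix.mul_apply, Fin.sum_univ_two]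
  · ext
    rw [Matrix.GeneralLinearGroup.val_det_apply]
    simp [Matrix.det_fin_two]

lemma card_SL2 (q : ℕ) (hq : Fintype.card F = q) :
    Nat.card (SL2 F) = (q + 1) * (q * (q - 1)) := by
  classical
  have hq2 : 2 ≤ q := hq ▸ Fintype.one_lt_card
  have hGL : Nat.card (GL (Fin 2) F) = (q^2 - 1) * (q^2 - q) := by
    rw [Matrix.card_GL_field]
    rw [Fin.prod_univ_two]
    simp [pow_zero, pow_one, hq]
  have hker : Nat.card (GL (Fin 2) F) =
      (q - 1) * Nat.card (Matrix.GeneralLinearGroup.det (n := Fin 2) (R := F)).ker := by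
    rw [Subgroup.card_eq_card_quotient_mul_card_subgroup
      (Matrix.GeneralLinearGroup.det (n := Fin 2) (R := F)).ker]
    congr 1
    rw [Nat.card_congr (QuotientGroup.quotientKerEquivOfSurjective _ det_surj).toEquiv]
    rw [Nat.card_eq_fintype_card, Fintype.card_units, hq]
  have hSL : Nat.card (SL2 F) = Nat.card (Matrix.GeneralLinearGroup.det (n := Fin 2) (R := F)).ker :=
    Nat.card_congr eSL
  rw [hSL]
  have hkerpos : 0 < q - 1 := by omega
  obtain ⟨k, hk⟩ : ∃ k, q = k + 2 := ⟨q - 2, by omega⟩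
  subst hk
  have e1 : (k+2)^2 - 1 = k^2 + 4*k + 3 := by
    have : (k+2)^2 = k^2+4*k+4 := by ring
    omega
  have e2 : (k+2)^2 - (k+2) = k^2 + 3*k + 2 := by
    have : (k+2)^2 = k^2+4*k+4 := by ring
    omega
  rw [e1, e2] at hGL
  have goal2 : ((k+2) + 1) * ((k+2) * ((k+2) - 1)) * ((k+2) - 1)
      = (k^2+4*k+3) * (k^2+3*k+2) := by
    have h3 : (k+2) - 1 = k + 1 := by omega
    rw [h3]
    ring
  have h4 := hGL.symm.trans hker
  apply Nat.eq_of_mul_eq_mul_right hkerpos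
  rw [goal2, h4]
  have h3 : (k+2) - 1 = k + 1 := by omega
  rw [h3]
  ring

end cards

section borel
variable {F : Type*} [Field F]

def phiAct (F : Type*) [Field F] : Fˣ →* MulAut (Multiplicative F) :=
  MonoidHom.mk'
    (fun u => AddEquiv.toMultiplicative ((DistribMulAction.toAddAut Fˣ F) (u ^ 2)))
    (by intro a b; ext x; simp [mul_pow, mul_smul])

lemma phiAct_apply (u : Fˣ) (x : Multiplicative F) :
    Multiplicative.toAdd ((phiAct F u) x) = (u : F)^2 * Multiplicative.toAdd x := by
  simp [phiAct, Units.smul_def]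

def psiB (F : Type*) [Field F] : (Multiplicative F ⋊[phiAct F] Fˣ) →* SL2 F :=
  MonoidHom.mk'
    (fun p => ⟨!![(p.right : F), Multiplicative.toAdd p.left * ((p.right⁻¹ : Fˣ) : F);
        0, ((p.right⁻¹ : Fˣ) : F)],
      by simp [Matrix.det_fin_two_of]⟩)
    (by
      intro p q
      apply Subtype.ext
      show (_ : Matrix (Fin 2) (Fin 2) F) = _ * _
      ext i j
      fin_cases i <;> fin_cases j <;>
        simp only [SemidirectProduct.mul_left, SemidirectProduct.mul_right, toAdd_mul,
          phiAct_apply, Matrix.cons_val', Matrix.cons_val_zero, Matrix.cons_val_one,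
          Matrix.head_cons, Matrix.head_fin_const, Matrix.empty_val',
          Matrix.cons_val_fin_one, Fin.isValue, Fin.zero_eta, Fin.mk_one, Matrix.mul_apply, Fin.sum_univ_two,
          Matrix.of_apply, Units.val_mul, _root_.mul_inv_rev, Units.val_inv_eq_inv_val] <;>
        field_simp <;>
        ring)

variable [Fintype F]

lemma psiB_inj : Function.Injective (psiB F) := by
  intro p q hpq
  have h := congrArg (fun A : SL2 F => (A : Matrix (Fin 2) (Fin 2) F)) hpq
  simp only [psiB, MonoidHom.mk'_apply] at h
  have h00 := congrFun (congrFun h 0) 0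
  have h01 := congrFun (congrFun h 0) 1
  simp at h00 h01
  have hr : p.right = q.right := Units.ext h00
  have hl : p.left = q.left := by
    change Multiplicative.toAdd p.left * ((p.right : F))⁻¹ = Multiplicative.toAdd q.left * ((q.right : F))⁻¹ at h01
    rw [hr] at h01
    have hne : ((q.right : F))⁻¹ ≠ 0 := inv_ne_zero (Units.ne_zero _)
    have := mul_right_cancel₀ hne h01
    exact Multiplicative.toAdd.injective this
  exact SemidirectProduct.ext hl hr

lemma card_SDP (q : ℕ) (hq : Fintype.card F = q) :
    Nat.card (Multiplicative F ⋊[phiAct F] Fˣ) = q * (q - 1) := by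
  classical
  have e : (Multiplicative F ⋊[phiAct F] Fˣ) ≃ (Multiplicative F × Fˣ) :=
    ⟨fun p => (p.left, p.right), fun p => ⟨p.1, p.2⟩, fun p => rfl, fun p => rfl⟩
  rw [Nat.card_congr e, Nat.card_prod]
  rw [Nat.card_eq_fintype_card (α := Fˣ), Fintype.card_units, hq]
  rw [Nat.card_congr Multiplicative.toAdd, Nat.card_eq_fintype_card, hq]

end borel

section singer
variable {F : Type*} [Field F] [Fintype F]

lemma coprime_qp1 (q : ℕ) (heven : q % 2 = 0) (hq1 : 2 ≤ q) :
    Nat.Coprime (q + 1) (q * (q - 1)) := by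
  have h1 : Nat.Coprime (q + 1) q := by
    simpa using Nat.coprime_succ_self_left (n := q)
  have h2 : Nat.Coprime (q + 1) (q - 1) := by
    have he : q + 1 = 2 + (q - 1) := by omega
    rw [he]
    rw [Nat.coprime_add_self_left]
    exact Nat.coprime_two_left.mpr (Nat.odd_iff.mpr (by omega))
  exact Nat.Coprime.mul_right h1 h2

lemma exists_A (q : ℕ) (hq : Fintype.card F = q) (heven : q % 2 = 0) (hq2 : q ≠ 2)
    [CharP F 2] :
    ∃ A₀ : Subgroup (SL2 F), IsCyclic A₀ ∧ Nat.card A₀ = q + 1 := by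
  classical
  have hq1 : 2 ≤ q := hq ▸ Fintype.one_lt_card
  have h2z : (2 : F) = 0 := by
    have := CharP.cast_eq_zero F 2
    exact_mod_cast this
  -- a value not of the form x² + x
  have hns : ¬ Function.Surjective (fun x : F => x * x + x) := by
    intro hsurj
    have hinj : Function.Injective (fun x : F => x * x + x) :=
      Finite.injective_iff_surjective.mpr hsurj
    have h01 : (0 : F) = 1 := hinj (by show (0:F)*0+0 = 1*1+1; rw [show (1:F)*1+1 = 2 by ring, h2z]; ring)
    exact one_ne_zero h01.symm
  rw [Function.Surjective] at hns
  push_neg at hns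
  obtain ⟨c, hc⟩ := hns
  -- the irreducible quadratic
  set f : F[X] := X ^ 2 + X - C c with hf
  have hmon : f.Monic := by
    rw [hf]
    monicity!
  have hfne : f ≠ 0 := hmon.ne_zero
  have hdeg : f.natDegree = 2 := by
    rw [hf]
    compute_degree!
  have hirr : Irreducible f := by
    rw [hmon.irreducible_iff_roots_eq_zero_of_degree_le_three (by omega) (by omega)]
    apply Multiset.eq_zero_of_forall_notMem
    intro x hx
    rw [Polynomial.mem_roots hfne] at hx
    have : x * x + x = c := by
      have := hx
      simp only [hf, Polynomial.IsRoot, Polynomial.eval_sub, Polynomial.eval_add,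
        Polynomial.eval_pow, Polynomial.eval_X, Polynomial.eval_C] at this
      have hxx : x ^ 2 + x - c = 0 := this
      have hx2 : x ^ 2 = x * x := sq x
      linear_combination hxx + hx2
    exact hc x this
  haveI hfact : Fact (Irreducible f) := ⟨hirr⟩
  -- the quadratic extension
  set K := AdjoinRoot f with hK
  haveI : Module.Finite F K := (AdjoinRoot.powerBasis hfne).finite
  haveI : Finite K := Module.finite_of_finite F
  haveI : Fintype K := Fintype.ofFinite K
  have hrank : Module.finrank F K = 2 := by
    rw [(AdjoinRoot.powerBasis hfne).finrank, AdjoinRoot.powerBasis_dim, hdeg]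
  have hcardK : Fintype.card K = q ^ 2 := by
    rw [Module.card_eq_pow_finrank (K := F) (V := K), hrank, hq]
  -- a primitive (q+1)-st root of unity
  obtain ⟨g, hg⟩ := IsCyclic.exists_monoid_generator (α := Kˣ)
  have horderg : orderOf g = q ^ 2 - 1 := by
    rw [orderOf_eq_card_of_forall_mem_zpowers
      (fun x => Subgroup.mem_zpowers_iff.mpr (by
        obtain ⟨n, hn⟩ := hg x
        exact ⟨(n : ℤ), by exact_mod_cast hn⟩)),
      Nat.card_units, Nat.card_eq_fintype_card, hcardK]
  have hfac : (q - 1) * (q + 1) = q ^ 2 - 1 := by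
    obtain ⟨k, rfl⟩ : ∃ k, q = k + 2 := ⟨q - 2, by omega⟩
    have h1 : (k + 2) ^ 2 = k ^ 2 + 4 * k + 4 := by ring
    have h2 : (k + 2 - 1) * (k + 2 + 1) = k ^ 2 + 4 * k + 3 := by
      have h3 : k + 2 - 1 = k + 1 := by omega
      rw [h3]; ring
    omega
  set ζ : Kˣ := g ^ (q - 1) with hζ
  have horz : orderOf ζ = q + 1 := by
    rw [hζ, orderOf_pow, horderg, ← hfac]
    rw [Nat.gcd_eq_right ⟨q + 1, by ring⟩]
    exact Nat.mul_div_cancel_left _ (by omega)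
  haveI : NeZero (q + 1) := ⟨by omega⟩
  have hprim : IsPrimitiveRoot ζ (q + 1) := horz ▸ IsPrimitiveRoot.orderOf ζ
  have hcardU : Fintype.card (rootsOfUnity (q + 1) K) = q + 1 :=
    by rw [← Nat.card_eq_fintype_card]; exact hprim.card_rootsOfUnity'
  -- the matrix representation
  set b : Module.Basis (Fin 2) F K :=
    (AdjoinRoot.powerBasis hfne).basis.reindex
      (finCongr (by rw [AdjoinRoot.powerBasis_dim, hdeg])) with hb
  set lmm := Algebra.leftMulMatrix b with hlmm
  have hdet : ∀ z : rootsOfUnity (q + 1) K, (lmm ((z : Kˣ) : K)).det = 1 := by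
    intro z
    have hz : (z : Kˣ) ^ (q + 1) = 1 := (mem_rootsOfUnity _ _).mp z.2
    set u : Fˣ := Units.map (Algebra.norm F (S := K)) (z : Kˣ) with hu
    have hupow : u ^ (q + 1) = 1 := by rw [hu, ← map_pow, hz, _root_.map_one]
    have hdvd1 : orderOf u ∣ q + 1 := orderOf_dvd_of_pow_eq_one hupow
    have hdvd2 : orderOf u ∣ q - 1 := by
      have := orderOf_dvd_natCard u
      rwa [Nat.card_units, Nat.card_eq_fintype_card, hq] at this
    have hcop : Nat.Coprime (q + 1) (q - 1) := by
      have := coprime_qp1 q heven hq1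
      exact Nat.Coprime.coprime_dvd_right ⟨q, by ring⟩ this
    have hord1 : orderOf u = 1 :=
      Nat.eq_one_of_dvd_coprimes hcop hdvd1 hdvd2
    have hu1 : u = 1 := orderOf_eq_one_iff.mp hord1
    have hnorm : Algebra.norm F ((z : Kˣ) : K) = 1 := by
      have := congrArg Units.val hu1
      simpa [hu] using this
    rw [← Algebra.norm_eq_matrix_det b, hnorm]
  -- the homomorphism into SL₂
  set θ : rootsOfUnity (q + 1) K →* SL2 F :=
    MonoidHom.mk' (fun z => ⟨lmm ((z : Kˣ) : K), hdet z⟩)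
      (by
        intro z w
        apply Subtype.ext
        show lmm _ = lmm _ * lmm _
        rw [← _root_.map_mul]
        norm_cast) with hθ
  have hθinj : Function.Injective θ := by
    intro z w hzw
    have h1 : lmm ((z : Kˣ) : K) = lmm ((w : Kˣ) : K) :=
      congrArg (fun A : SL2 F => (A : Matrix (Fin 2) (Fin 2) F)) hzw
    have h2 : ((z : Kˣ) : K) = ((w : Kˣ) : K) := by
      have hinj : Function.Injective lmm := by
        rw [hlmm]
        exact (Algebra.leftMulMatrix b).toRingHom.injective
      exact hinj h1
    exact Subtype.ext (Units.ext h2)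
  refine ⟨θ.range, ?_, ?_⟩
  · haveI := rootsOfUnity.isCyclic K (q + 1)
    exact isCyclic_of_surjective θ.rangeRestrict θ.rangeRestrict_surjective
  · rw [Nat.card_congr (MonoidHom.ofInjective hθinj).toEquiv.symm,
      Nat.card_eq_fintype_card, hcardU]

end singer

section main

variable {F : Type*} [Field F] [Fintype F]

theorem stmt17' (q : ℕ) (hq : q = Fintype.card F)
    (heven : q % 2 = 0) (hq2 : q ≠ 2) :
    ∃ A B : Subgroup (PSL2 F),
      IsCyclic A ∧ Nat.card A = q + 1 ∧
      Nat.card B = q * (q - 1) ∧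
      (∃ φ : Fˣ →* MulAut (Multiplicative F),
        Nonempty (B ≃* Multiplicative F ⋊[φ] Fˣ)) ∧
      Group.IsSolvable (A × B) ∧
      Realizable (A × B) (PSL2 F) := by
  classical
  have hq' : Fintype.card F = q := hq.symm
  have hq1 : 2 ≤ q := hq' ▸ Fintype.one_lt_card
  haveI : CharP F 2 := charF (hq' ▸ heven)
  obtain ⟨A₀, hA₀cyc, hA₀card⟩ := exists_A q hq' heven hq2
  set B₀ := (psiB F).range with hB₀
  have hB₀card : Nat.card B₀ = q * (q - 1) := by
    rw [Nat.card_congr (MonoidHom.ofInjective psiB_inj).toEquiv.symm, card_SDP q hq']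
  have hcenter : Subgroup.center (SL2 F) = ⊥ := center_bot (hq' ▸ heven)
  set π := QuotientGroup.mk' (Subgroup.center (SL2 F)) with hπ
  have hπinj : Function.Injective π := by
    rw [← MonoidHom.ker_eq_bot_iff, hπ, QuotientGroup.ker_mk', hcenter]
  have hπsurj : Function.Surjective π := QuotientGroup.mk'_surjective _
  set A := A₀.map π with hA
  set B := B₀.map π with hBdef
  have eA : A₀ ≃* A := Subgroup.equivMapOfInjective A₀ π hπinj
  have eB : B₀ ≃* B := Subgroup.equivMapOfInjective B₀ π hπinj
  have hAcyc : IsCyclic A := by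
    haveI := hA₀cyc
    exact isCyclic_of_surjective eA.toMonoidHom eA.surjective
  have hAcard : Nat.card A = q + 1 := by
    rw [Nat.card_congr eA.toEquiv.symm, hA₀card]
  have hBcard : Nat.card B = q * (q - 1) := by
    rw [Nat.card_congr eB.toEquiv.symm, hB₀card]
  have eBsdp : B ≃* (Multiplicative F ⋊[phiAct F] Fˣ) :=
    eB.symm.trans (MonoidHom.ofInjective psiB_inj).symm
  haveI hsdpSolv : Group.IsSolvable (Multiplicative F ⋊[phiAct F] Fˣ) :=
    solvable_of_ker_le_range SemidirectProduct.inl SemidirectProduct.rightHom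
      (le_of_eq SemidirectProduct.range_inl_eq_ker_rightHom.symm)
  haveI hBsolv : Group.IsSolvable B :=
    solvable_of_solvable_injective (f := eBsdp.toMonoidHom) eBsdp.injective
  haveI hAsolv : Group.IsSolvable A := by
    haveI := hAcyc
    letI : CommGroup A := IsCyclic.commGroup
    exact inferInstance
  have hcop : Nat.Coprime (Nat.card A) (Nat.card B) := by
    rw [hAcard, hBcard]
    exact coprime_qp1 q heven hq1
  have hcards : Nat.card A * Nat.card B = Nat.card (PSL2 F) := by
    rw [hAcard, hBcard]
    rw [← Nat.card_congr (Equiv.ofBijective π ⟨hπinj, hπsurj⟩), card_SL2 q hq']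
  exact ⟨A, B, hAcyc, hAcard, hBcard, ⟨phiAct F, ⟨eBsdp⟩⟩, inferInstance,
    realizable_of_factorization A B hcop hcards⟩

end main

/-- For an even prime power `q ≠ 2`, the pair `(A × B, PSL₂(F_q))` is realizable, where
`A` is cyclic of order `q + 1` and `B ≅ F_q ⋊ F_qˣ` has order `q(q − 1)`; in particular
`PSL₂(F_q)` is the type of a Hopf-Galois structure on a solvable extension. -/
theorem stmt17 {F : Type*} [Field F] [Fintype F] (q : ℕ) (hq : q = Fintype.card F)
    (heven : q % 2 = 0) (hq2 : q ≠ 2) :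
    ∃ A B : Subgroup (PSL2 F),
      IsCyclic A ∧ Nat.card A = q + 1 ∧
      Nat.card B = q * (q - 1) ∧
      (∃ φ : Fˣ →* MulAut (Multiplicative F),
        Nonempty (B ≃* Multiplicative F ⋊[φ] Fˣ)) ∧
      IsSolvable (A × B) ∧
      Realizable (A × B) (PSL2 F) := stmt17' q hq heven hq2
end

section
/- For every prime power q ≠ 2, 3, there exists a solvable group G of order |PSL₂(F_q)| such that Hol(PSL₂(F_q)) contains a regular subgroup isomorphic to G; equivalently, PSL₂(F_q) occurs as the additive group of a skew brace whose multiplicative group is solvable. -/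
namespace Stmt19

open Matrix MulOpposite

variable {F : Type*} [Field F]

local notation "Mat" => Matrix (Fin 2) (Fin 2) F
local notation "SL2" => Matrix.SpecialLinearGroup (Fin 2) F
local notation "GL2" => GL (Fin 2) F

/-- The companion matrix of `X ^ 2 - X - n`. -/
def Mc (n : F) : Mat := !![0, n; 1, 1]

lemma T_entries (n a b : F) : a • (1 : Mat) + b • Mc n = !![a, b * n; b, a + b] := by
  ext i j
  fin_cases i <;> fin_cases j <;> simp [Mc, Matrix.one_apply]

lemma T_mul (n a b c d : F) :
    (a • (1 : Mat) + b • Mc n) * (c • (1 : Mat) + d • Mc n)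
      = (a * c + b * d * n) • (1 : Mat) + (a * d + b * c + b * d) • Mc n := by
  rw [T_entries, T_entries, T_entries]
  ext i j
  fin_cases i <;> fin_cases j <;>
    simp [Matrix.mul_apply, Fin.sum_univ_two] <;> ring

lemma T_det (n a b : F) :
    (a • (1 : Mat) + b • Mc n).det = a * a + a * b - n * (b * b) := by
  rw [T_entries, Matrix.det_fin_two_of]; ring

lemma T_det_ne {n : F} (hn : ∀ c : F, c * c + c ≠ n) {a b : F} (h : ¬(a = 0 ∧ b = 0)) :
    a * a + a * b - n * (b * b) ≠ 0 := by
  rcases eq_or_ne b 0 with hb | hb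
  · subst hb
    have ha : a ≠ 0 := fun h0 => h ⟨h0, rfl⟩
    simpa using mul_ne_zero ha ha
  · intro he
    apply hn (a * b⁻¹)
    field_simp
    linear_combination he

lemma upper_mul {A B : Mat} (hA : A 1 0 = 0) (hB : B 1 0 = 0) : (A * B) 1 0 = 0 := by
  rw [Matrix.mul_apply, Fin.sum_univ_two, hA, hB]; ring

lemma upper_inv {u : GL2} (h : ((u : Mat)) 1 0 = 0) : (((u⁻¹ : GL2) : Mat)) 1 0 = 0 := by
  have h1 : ((u⁻¹ : GL2) : Mat) = (u : Mat)⁻¹ := Matrix.coe_units_inv u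
  rw [h1, Matrix.inv_def, Matrix.adjugate_fin_two]
  simp [h]

lemma det_inv_mul (u : GL2) : ((u⁻¹ : GL2) : Mat).det * ((u : Mat)).det = 1 := by
  rw [← Matrix.det_mul, ← Units.val_mul, inv_mul_cancel, Units.val_one, Matrix.det_one]

lemma val_mul_inv (u : GL2) : (u : Mat) * ((u⁻¹ : GL2) : Mat) = 1 := by
  rw [← Units.val_mul, mul_inv_cancel, Units.val_one]

lemma val_inv_mul (u : GL2) : ((u⁻¹ : GL2) : Mat) * (u : Mat) = 1 := by
  rw [← Units.val_mul, inv_mul_cancel, Units.val_one]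

/-- Elements of the center of `SL₂` are scalar matrices. -/
lemma center_scalar {z : SL2} (hz : z ∈ Subgroup.center SL2) :
    ∃ ω : F, (z : Mat) = ω • (1 : Mat) := by
  obtain ⟨r, -, hr⟩ := Matrix.SpecialLinearGroup.mem_center_iff.mp hz
  refine ⟨r, ?_⟩
  rw [← hr]
  ext i j
  simp [Matrix.scalar_apply, Matrix.one_apply, Matrix.diagonal]

/-- The subgroup of `GL₂ × GL₂ᵐᵒᵖ` consisting of pairs `(u, v)` with `u` upper triangular,
`v` in the non-split torus `F[Mc n]ˣ`, and `det u * det v = 1`. -/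
def P (n : F) : Subgroup (GL2 × (GL2)ᵐᵒᵖ) where
  carrier := {p | ((p.1 : Mat)).det * (((unop p.2 : GL2) : Mat)).det = 1 ∧
      ((p.1 : Mat)) 1 0 = 0 ∧ ∃ a b : F, ((unop p.2 : GL2) : Mat) = a • (1 : Mat) + b • Mc n}
  one_mem' := by
    refine ⟨by simp, by simp [Matrix.one_apply], 1, 0, by simp⟩
  mul_mem' := by
    rintro ⟨u, v⟩ ⟨u', v'⟩ ⟨hd, hu, a, b, hv⟩ ⟨hd', hu', a', b', hv'⟩
    refine ⟨?_, ?_, ?_⟩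
    · simp only [Prod.fst_mul, Prod.snd_mul, unop_mul, Units.val_mul, Matrix.det_mul]
      linear_combination (((unop v' : GL2) : Mat).det * ((u' : Mat)).det) * hd + hd'
    · simp only [Prod.fst_mul, Units.val_mul]
      exact upper_mul hu hu'
    · simp only [Prod.snd_mul, unop_mul, Units.val_mul]
      rw [hv', hv, T_mul]
      exact ⟨_, _, rfl⟩
  inv_mem' := by
    rintro ⟨u, v⟩ ⟨hd, hu, a, b, hv⟩
    refine ⟨?_, upper_inv hu, ?_⟩
    · have h1 : ((u⁻¹ : GL2) : Mat).det = ((u : Mat)).det⁻¹ :=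
        eq_inv_of_mul_eq_one_left (det_inv_mul u)
      have h2 : (((unop v)⁻¹ : GL2) : Mat).det = (((unop v : GL2) : Mat)).det⁻¹ :=
        eq_inv_of_mul_eq_one_left (det_inv_mul (unop v))
      show ((u⁻¹ : GL2) : Mat).det * (((unop v)⁻¹ : GL2) : Mat).det = 1
      rw [h1, h2, ← mul_inv]
      rw [show ((u : Mat)).det * (((unop v : GL2) : Mat)).det = 1 from hd, inv_one]
    · have hdv : (((unop v : GL2) : Mat)).det ≠ 0 := by
        intro h0
        rw [show ((u,v).1 : Mat) = (u : Mat) from rfl,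
          show ((unop (u,v).2 : GL2) : Mat) = ((unop v : GL2) : Mat) from rfl, h0, mul_zero] at hd
        exact zero_ne_one hd
      have hd2 : (((unop v : GL2) : Mat)).det = a * a + a * b - n * (b * b) := by
        rw [show ((unop v : GL2) : Mat) = _ from hv, T_det]
      set d := (((unop v : GL2) : Mat)).det with hdd
      refine ⟨d⁻¹ * (a + b), -(d⁻¹ * b), ?_⟩
      show (((unop v)⁻¹ : GL2) : Mat) = _
      rw [Matrix.coe_units_inv]
      apply Matrix.inv_eq_right_inv
      rw [hv, T_mul]
      have c1 : a * (d⁻¹ * (a + b)) + b * -(d⁻¹ * b) * n = 1 := by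
        field_simp
        linear_combination hd2.symm
      have c0 : a * -(d⁻¹ * b) + b * (d⁻¹ * (a + b)) + b * -(d⁻¹ * b) = 0 := by
        field_simp
        ring
      rw [c1, c0]
      simp

/-- Canonical projection `SL₂ → PSL₂`. -/
abbrev piF : SL2 →* PSL2 F := QuotientGroup.mk' _

lemma piF_surj : Function.Surjective (piF (F := F)) := QuotientGroup.mk'_surjective _

/-- The action of `P n` on `SL₂`, `(u, v) • s = u * s * v`. -/
def actSL {n : F} (p : ↥(P n)) (s : SL2) : SL2 :=
  ⟨((p.val.1 : GL2) : Mat) * (s : Mat) * ((unop p.val.2 : GL2) : Mat), by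
    rw [Matrix.det_mul, Matrix.det_mul, s.prop, mul_one]
    exact p.prop.1⟩

lemma actSL_coe {n : F} (p : ↥(P n)) (s : SL2) :
    ((actSL p s : SL2) : Mat)
      = ((p.val.1 : GL2) : Mat) * (s : Mat) * ((unop p.val.2 : GL2) : Mat) := rfl

lemma actSL_one {n : F} (s : SL2) : actSL (1 : ↥(P n)) s = s := by
  apply Subtype.ext
  show ((((1 : ↥(P n)).val.1 : GL2)) : Mat) * (s : Mat) * _ = _
  simp

lemma actSL_mul {n : F} (p q : ↥(P n)) (s : SL2) :
    actSL (p * q) s = actSL p (actSL q s) := by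
  apply Subtype.ext
  rw [actSL_coe, actSL_coe, actSL_coe]
  have h1 : (p * q).val.1 = p.val.1 * q.val.1 := rfl
  have h2 : unop (p * q).val.2 = unop q.val.2 * unop p.val.2 := rfl
  rw [h1, h2, Units.val_mul, Units.val_mul]
  noncomm_ring

lemma actSL_central {n : F} (p : ↥(P n)) {x z : SL2} (hz : z ∈ Subgroup.center SL2) :
    actSL p (x * z) = actSL p x * z := by
  obtain ⟨ω, hω⟩ := center_scalar hz
  apply Subtype.ext
  rw [actSL_coe, Matrix.SpecialLinearGroup.coe_mul, Matrix.SpecialLinearGroup.coe_mul,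
    actSL_coe, hω]
  simp only [Matrix.mul_smul, Matrix.smul_mul, mul_one]

/-- The action of `P n` on `PSL₂`. -/
def act {n : F} (p : ↥(P n)) : PSL2 F → PSL2 F :=
  Quotient.map' (actSL p) (by
    intro x y hxy
    have h : x⁻¹ * y ∈ Subgroup.center SL2 := (QuotientGroup.leftRel_apply).mp hxy
    apply (QuotientGroup.leftRel_apply).mpr
    have hy : y = x * (x⁻¹ * y) := by group
    rw [hy, actSL_central p h, inv_mul_cancel_left]
    exact h)

lemma act_mk {n : F} (p : ↥(P n)) (s : SL2) : act p (piF s) = piF (actSL p s) := rfl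

lemma act_one {n : F} (x : PSL2 F) : act (1 : ↥(P n)) x = x := by
  obtain ⟨s, rfl⟩ := piF_surj x
  rw [act_mk, actSL_one]

lemma act_mul {n : F} (p q : ↥(P n)) (x : PSL2 F) :
    act (p * q) x = act p (act q x) := by
  obtain ⟨s, rfl⟩ := piF_surj x
  rw [act_mk, act_mk, act_mk, actSL_mul]

/-- The regular subgroup, as a homomorphism from `P n` to permutations of `PSL₂`. -/
def theta (n : F) : ↥(P n) →* Equiv.Perm (PSL2 F) :=
  MonoidHom.mk'
    (fun p =>
      { toFun := act p
        invFun := act p⁻¹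
        left_inv := fun x => by rw [← act_mul, inv_mul_cancel, act_one]
        right_inv := fun x => by rw [← act_mul, mul_inv_cancel, act_one] })
    (fun p q => Equiv.ext fun x => act_mul p q x)

lemma theta_apply {n : F} (p : ↥(P n)) (x : PSL2 F) : theta n p x = act p x := rfl

/-- Conjugation of `SL₂` by an element of `GL₂`. -/
def conjSL (v : GL2) : SL2 →* SL2 :=
  MonoidHom.mk'
    (fun s => ⟨((v⁻¹ : GL2) : Mat) * (s : Mat) * (v : Mat), by
      rw [Matrix.det_mul, Matrix.det_mul, s.prop, mul_one, ← Matrix.det_mul, val_inv_mul,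
        Matrix.det_one]⟩)
    (fun s t => by
      apply Subtype.ext
      show ((v⁻¹ : GL2) : Mat) * ((s * t : SL2) : Mat) * (v : Mat) = _
      rw [Matrix.SpecialLinearGroup.coe_mul]
      show _ = ((v⁻¹ : GL2) : Mat) * (s : Mat) * (v : Mat)
        * (((v⁻¹ : GL2) : Mat) * (t : Mat) * (v : Mat))
      have h := val_mul_inv v
      calc ((v⁻¹ : GL2) : Mat) * ((s : Mat) * (t : Mat)) * (v : Mat)
          = ((v⁻¹ : GL2) : Mat) * (s : Mat) * ((v : Mat) * ((v⁻¹ : GL2) : Mat))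
            * (t : Mat) * (v : Mat) := by rw [h]; noncomm_ring
        _ = _ := by noncomm_ring)

lemma conjSL_coe (v : GL2) (s : SL2) :
    ((conjSL v s : SL2) : Mat) = ((v⁻¹ : GL2) : Mat) * (s : Mat) * (v : Mat) := rfl

lemma conjSL_central (v : GL2) {z : SL2} (hz : z ∈ Subgroup.center SL2) :
    conjSL v z = z := by
  obtain ⟨ω, hω⟩ := center_scalar hz
  apply Subtype.ext
  rw [conjSL_coe, hω]
  rw [Matrix.mul_smul, Matrix.smul_mul, mul_one, val_inv_mul]

/-- Conjugation of `PSL₂` by an element of `GL₂`. -/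
def conjPSL (v : GL2) : PSL2 F →* PSL2 F :=
  QuotientGroup.lift _ ((QuotientGroup.mk' _).comp (conjSL v)) (by
    intro z hz
    show piF (conjSL v z) = 1
    rw [conjSL_central v hz]
    exact (QuotientGroup.eq_one_iff z).mpr hz)

lemma conjPSL_mk (v : GL2) (s : SL2) : conjPSL v (piF s) = piF (conjSL v s) := rfl

lemma conjSL_inv_cancel (v : GL2) (s : SL2) : conjSL v⁻¹ (conjSL v s) = s := by
  apply Subtype.ext
  rw [conjSL_coe, conjSL_coe, inv_inv]
  have h1 := val_mul_inv v
  have h2 := val_inv_mul v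
  calc (v : Mat) * (((v⁻¹ : GL2) : Mat) * (s : Mat) * (v : Mat)) * ((v⁻¹ : GL2) : Mat)
      = ((v : Mat) * ((v⁻¹ : GL2) : Mat)) * (s : Mat)
        * ((v : Mat) * ((v⁻¹ : GL2) : Mat)) := by noncomm_ring
    _ = (s : Mat) := by rw [h1]; noncomm_ring

/-- Conjugation by `GL₂` as an automorphism of `PSL₂`. -/
def conjAut (v : GL2) : MulAut (PSL2 F) :=
  { toFun := conjPSL v
    invFun := conjPSL v⁻¹
    left_inv := fun x => by
      obtain ⟨s, rfl⟩ := piF_surj x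
      rw [conjPSL_mk, conjPSL_mk, conjSL_inv_cancel]
    right_inv := fun x => by
      obtain ⟨s, rfl⟩ := piF_surj x
      rw [conjPSL_mk, conjPSL_mk]
      have := conjSL_inv_cancel v⁻¹ s
      rw [inv_inv] at this
      rw [this]
    map_mul' := map_mul _ }

lemma conjAut_apply (v : GL2) (s : SL2) :
    MulAut.toPerm (M := PSL2 F) (conjAut v) (piF s) = piF (conjSL v s) := rfl

/-- Every element of the range of `theta n` lies in the holomorph. -/
lemma theta_mem_Hol {n : F} (p : ↥(P n)) : theta n p ∈ Hol (PSL2 F) := by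
  set u : GL2 := p.val.1 with hu
  set v : GL2 := unop p.val.2 with hv
  have hdet : ((u : Mat)).det * ((v : Mat)).det = 1 := p.prop.1
  set g : SL2 := ⟨(u : Mat) * (v : Mat), by rw [Matrix.det_mul]; exact hdet⟩ with hg
  have key : theta n p
      = MulAut.toPerm (M := PSL2 F) (MulAut.conj (piF g)) * rho (PSL2 F) ((piF g)⁻¹)
        * MulAut.toPerm (M := PSL2 F) (conjAut v) := by
    apply Equiv.ext
    intro x
    obtain ⟨ξ, rfl⟩ := piF_surj x
    rw [theta_apply, act_mk]
    rw [Equiv.Perm.mul_apply, Equiv.Perm.mul_apply, conjAut_apply]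
    show piF (actSL p ξ)
      = MulAut.toPerm (M := PSL2 F) (MulAut.conj (piF g)) (rho (PSL2 F) ((piF g)⁻¹) (piF (conjSL v ξ)))
    rw [show rho (PSL2 F) ((piF g)⁻¹) (piF (conjSL v ξ))
        = piF (conjSL v ξ) * ((piF g)⁻¹)⁻¹ from rfl, inv_inv]
    rw [show MulAut.toPerm (M := PSL2 F) (MulAut.conj (piF g)) (piF (conjSL v ξ) * piF g)
        = piF g * (piF (conjSL v ξ) * piF g) * (piF g)⁻¹ from rfl]
    rw [mul_assoc, mul_assoc, mul_inv_cancel, mul_one, ← _root_.map_mul]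
    congr 1
    apply Subtype.ext
    rw [Matrix.SpecialLinearGroup.coe_mul, conjSL_coe, actSL_coe]
    show (u : Mat) * (ξ : Mat) * (v : Mat)
      = (u : Mat) * (v : Mat) * (((v⁻¹ : GL2) : Mat) * (ξ : Mat) * (v : Mat))
    have h1 := val_mul_inv v
    calc (u : Mat) * (ξ : Mat) * (v : Mat)
        = (u : Mat) * ((v : Mat) * ((v⁻¹ : GL2) : Mat)) * (ξ : Mat) * (v : Mat) := by
          rw [h1]; noncomm_ring
      _ = _ := by noncomm_ring
  rw [key]
  refine mul_mem (mul_mem ?_ ?_) ?_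
  · exact Subgroup.subset_closure (Or.inr ⟨_, rfl⟩)
  · exact Subgroup.subset_closure (Or.inl ⟨_, rfl⟩)
  · exact Subgroup.subset_closure (Or.inr ⟨_, rfl⟩)

/-- Transitivity: every element of `PSL₂` is in the orbit of `1` under `P n`. -/
lemma theta_transitive {n : F} (hn : ∀ c : F, c * c + c ≠ n) (z : PSL2 F) :
    ∃ p : ↥(P n), theta n p 1 = z := by
  obtain ⟨s, rfl⟩ := piF_surj z
  have hab : ¬((s : Mat) 1 1 - (s : Mat) 1 0 = 0 ∧ (s : Mat) 1 0 = 0) := by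
    rintro ⟨h1, h2⟩
    have h3 : (s : Mat) 1 1 = 0 := by rw [h2, sub_zero] at h1; exact h1
    have hd := s.prop
    rw [Matrix.det_fin_two, h2, h3] at hd
    simp at hd
  have hdm : (((s : Mat) 1 1 - (s : Mat) 1 0) • (1 : Mat) + (s : Mat) 1 0 • Mc n).det ≠ 0 := by
    rw [T_det]; exact T_det_ne hn hab
  have hdu : IsUnit (((s : Mat) 1 1 - (s : Mat) 1 0) • (1 : Mat) + (s : Mat) 1 0 • Mc n).det :=
    isUnit_iff_ne_zero.mpr hdm
  set vm : Mat := ((s : Mat) 1 1 - (s : Mat) 1 0) • (1 : Mat) + (s : Mat) 1 0 • Mc n with hvm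
  set v : GL2 := Matrix.nonsingInvUnit vm hdu with hv
  have hvcoe : (v : Mat) = vm := rfl
  have hvinv : ((v⁻¹ : GL2) : Mat) = vm⁻¹ := rfl
  set u : GL2 := Matrix.SpecialLinearGroup.toGL s * v⁻¹ with hu
  have hucoe : (u : Mat) = (s : Mat) * vm⁻¹ := by
    rw [hu, Units.val_mul]
    rfl
  have hinvmul : vm⁻¹ * vm = 1 := Matrix.nonsing_inv_mul vm hdu
  have c1 : ((u : Mat)).det * ((v : Mat)).det = 1 := by
    rw [hucoe, hvcoe, Matrix.det_mul, mul_assoc, ← Matrix.det_mul, hinvmul, Matrix.det_one,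
      mul_one, s.prop]
  have c2 : ((u : Mat)) 1 0 = 0 := by
    rw [hucoe, Matrix.mul_apply, Fin.sum_univ_two, Matrix.inv_def, hvm, T_entries,
      Matrix.adjugate_fin_two]
    simp [Matrix.smul_apply, Matrix.det_fin_two_of]
    ring
  refine ⟨⟨(u, op v), c1, c2, _, _, hvcoe⟩, ?_⟩
  have h1 : (1 : PSL2 F) = piF 1 := (piF.map_one).symm
  rw [h1, theta_apply, act_mk]
  congr 1
  apply Subtype.ext
  rw [actSL_coe]
  show (u : Mat) * ((1 : SL2) : Mat) * (v : Mat) = _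
  rw [Matrix.SpecialLinearGroup.coe_one, mul_one, hucoe, hvcoe, mul_assoc, hinvmul, mul_one]

/-- Freeness: an element of `P n` fixing some point acts as the identity. -/
lemma theta_free {n : F} (hn : ∀ c : F, c * c + c ≠ n) (p : ↥(P n)) (x : PSL2 F)
    (hfix : theta n p x = x) : theta n p = 1 := by
  obtain ⟨ξ, rfl⟩ := piF_surj x
  rw [theta_apply, act_mk] at hfix
  obtain ⟨z, hz, hzeq⟩ := (QuotientGroup.mk'_eq_mk' (Subgroup.center SL2)).mp hfix
  obtain ⟨ζ, hζ⟩ := center_scalar hz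
  obtain ⟨hdet, hup, a, b, hv⟩ := p.prop
  have E : ζ • (((p.val.1 : GL2) : Mat) * (ξ : Mat) * ((unop p.val.2 : GL2) : Mat))
      = (ξ : Mat) := by
    have h := congrArg (fun t : SL2 => (t : Mat)) hzeq
    simp only [Matrix.SpecialLinearGroup.coe_mul, actSL_coe] at h
    rw [hζ, Matrix.mul_smul, mul_one] at h
    exact h
  have hζ0 : ζ ≠ 0 := by
    intro h0
    have hdz := z.prop
    rw [hζ, h0] at hdz
    simp at hdz
  by_cases hb : b = 0
  · -- the torus part is scalar, so the permutation is trivial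
    have hva : ((unop p.val.2 : GL2) : Mat) = a • (1 : Mat) := by rw [hv, hb]; simp
    rw [hva, Matrix.mul_smul, mul_one, smul_smul] at E
    have hu1 : (ζ * a) • ((p.val.1 : GL2) : Mat) = 1 := by
      have E2 : ((ζ * a) • ((p.val.1 : GL2) : Mat)) * (ξ : Mat) = (ξ : Mat) := by
        rw [Matrix.smul_mul]; exact E
      have h5 : (ξ : Mat) * ((ξ⁻¹ : SL2) : Mat) = 1 := by
        rw [← Matrix.SpecialLinearGroup.coe_mul, mul_inv_cancel,
          Matrix.SpecialLinearGroup.coe_one]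
      have h4 : ((ζ * a) • ((p.val.1 : GL2) : Mat)) * ((ξ : Mat) * ((ξ⁻¹ : SL2) : Mat))
          = (ξ : Mat) * ((ξ⁻¹ : SL2) : Mat) := by
        rw [← mul_assoc, E2]
      rw [h5, mul_one] at h4
      exact h4
    apply Equiv.ext
    intro y
    obtain ⟨η, rfl⟩ := piF_surj y
    show act p (piF η) = (1 : Equiv.Perm (PSL2 F)) (piF η)
    rw [Equiv.Perm.one_apply, act_mk]
    apply (QuotientGroup.mk'_eq_mk' (Subgroup.center SL2)).mpr
    refine ⟨z, hz, ?_⟩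
    apply Subtype.ext
    rw [Matrix.SpecialLinearGroup.coe_mul, actSL_coe, hζ, hva]
    calc ((p.val.1 : GL2) : Mat) * (η : Mat) * (a • (1 : Mat)) * (ζ • (1 : Mat))
        = ((ζ * a) • ((p.val.1 : GL2) : Mat)) * (η : Mat) := by
          rw [Matrix.mul_smul, Matrix.mul_smul, mul_one, mul_one, smul_smul, Matrix.smul_mul]
      _ = (η : Mat) := by rw [hu1, one_mul]
  · exfalso
    have hxx : (ξ : Mat) * ((ξ⁻¹ : SL2) : Mat) = 1 := by
      rw [← Matrix.SpecialLinearGroup.coe_mul, mul_inv_cancel,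
        Matrix.SpecialLinearGroup.coe_one]
    have hui : ((p.val.1⁻¹ : GL2) : Mat) * ((p.val.1 : GL2) : Mat) = 1 := val_inv_mul _
    have hum10 : ((p.val.1⁻¹ : GL2) : Mat) 1 0 = 0 := upper_inv hup
    have step1 : ((p.val.1⁻¹ : GL2) : Mat)
        * ((ζ • (((p.val.1 : GL2) : Mat) * (ξ : Mat) * ((unop p.val.2 : GL2) : Mat)))
          * ((ξ⁻¹ : SL2) : Mat))
        = ζ • ((ξ : Mat) * ((unop p.val.2 : GL2) : Mat) * ((ξ⁻¹ : SL2) : Mat)) := by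
      rw [Matrix.smul_mul, Matrix.mul_smul]
      congr 1
      calc ((p.val.1⁻¹ : GL2) : Mat)
          * (((p.val.1 : GL2) : Mat) * (ξ : Mat) * ((unop p.val.2 : GL2) : Mat)
            * ((ξ⁻¹ : SL2) : Mat))
          = (((p.val.1⁻¹ : GL2) : Mat) * ((p.val.1 : GL2) : Mat))
            * ((ξ : Mat) * ((unop p.val.2 : GL2) : Mat) * ((ξ⁻¹ : SL2) : Mat)) := by
            noncomm_ring
        _ = _ := by rw [hui, one_mul]
    have hC : ζ • ((ξ : Mat) * ((unop p.val.2 : GL2) : Mat) * ((ξ⁻¹ : SL2) : Mat))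
        = ((p.val.1⁻¹ : GL2) : Mat) := by
      rw [← step1, E, hxx, mul_one]
    have hC10 : ((ξ : Mat) * ((unop p.val.2 : GL2) : Mat) * ((ξ⁻¹ : SL2) : Mat)) 1 0 = 0 := by
      have h := congrArg (fun A : Mat => A 1 0) hC
      simp only [Matrix.smul_apply, smul_eq_mul] at h
      rw [hum10] at h
      exact (mul_eq_zero.mp h).resolve_left hζ0
    have hCD : (ξ : Mat) * ((unop p.val.2 : GL2) : Mat) * ((ξ⁻¹ : SL2) : Mat)
        = a • (1 : Mat) + b • ((ξ : Mat) * Mc n * ((ξ⁻¹ : SL2) : Mat)) := by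
      rw [hv, Matrix.mul_add, Matrix.add_mul, Matrix.mul_smul, Matrix.smul_mul, mul_one,
        Matrix.mul_smul, Matrix.smul_mul, hxx]
    have hD10 : ((ξ : Mat) * Mc n * ((ξ⁻¹ : SL2) : Mat)) 1 0 = 0 := by
      rw [hCD] at hC10
      simp only [Matrix.add_apply, Matrix.smul_apply, Matrix.one_apply, smul_eq_mul] at hC10
      simp at hC10
      rcases hC10 with h | h
      · exact absurd h hb
      · exact h
    set D : Mat := (ξ : Mat) * Mc n * ((ξ⁻¹ : SL2) : Mat) with hD
    have hdetD : (D - D 0 0 • (1 : Mat)).det = 0 := by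
      rw [Matrix.det_fin_two]
      simp [Matrix.sub_apply, Matrix.smul_apply, Matrix.one_apply, hD10]
    have hfac : D - D 0 0 • (1 : Mat) = (ξ : Mat) * (Mc n - D 0 0 • (1 : Mat)) * ((ξ⁻¹ : SL2) : Mat) := by
      rw [Matrix.mul_sub, Matrix.sub_mul, Matrix.mul_smul, Matrix.smul_mul, mul_one, hxx, hD]
    have hdetD' : (D - D 0 0 • (1 : Mat)).det = (Mc n - D 0 0 • (1 : Mat)).det := by
      rw [hfac, Matrix.det_mul, Matrix.det_mul, ξ.prop, (ξ⁻¹).prop]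
      ring
    have hval : (Mc n - D 0 0 • (1 : Mat)).det = D 0 0 * D 0 0 - D 0 0 - n := by
      rw [Matrix.det_fin_two]
      simp [Mc, Matrix.sub_apply, Matrix.smul_apply, Matrix.one_apply]
      ring
    apply hn (-(D 0 0))
    have h0 : D 0 0 * D 0 0 - D 0 0 - n = 0 := by rw [← hval, ← hdetD', hdetD]
    linear_combination h0

/-- The Borel subgroup of `SL₂`, viewed inside `GL₂`. -/
def Bup : Subgroup GL2 where
  carrier := {u | ((u : Mat)) 1 0 = 0 ∧ ((u : Mat)).det = 1}
  one_mem' := ⟨by simp [Matrix.one_apply], by simp⟩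
  mul_mem' := by
    rintro u u' ⟨h1, h2⟩ ⟨h1', h2'⟩
    exact ⟨by rw [Units.val_mul]; exact upper_mul h1 h1',
      by rw [Units.val_mul, Matrix.det_mul, h2, h2', one_mul]⟩
  inv_mem' := by
    rintro u ⟨h1, h2⟩
    refine ⟨upper_inv h1, ?_⟩
    have h := det_inv_mul u
    rw [h2, mul_one] at h
    exact h

/-- The non-split torus `F[Mc n]ˣ` inside `GL₂`. -/
def Tsub (n : F) : Subgroup GL2 where
  carrier := {v | ∃ a b : F, (v : Mat) = a • (1 : Mat) + b • Mc n}
  one_mem' := ⟨1, 0, by simp⟩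
  mul_mem' := by
    rintro v w ⟨a, b, hv⟩ ⟨c, d, hw⟩
    exact ⟨_, _, by rw [Units.val_mul, hv, hw, T_mul]⟩
  inv_mem' := by
    rintro v ⟨a, b, hv⟩
    have hdv : ((v : Mat)).det ≠ 0 := by
      intro h0
      have h := det_inv_mul v
      rw [h0, mul_zero] at h
      exact zero_ne_one h
    have hd2 : ((v : Mat)).det = a * a + a * b - n * (b * b) := by rw [hv, T_det]
    set d := ((v : Mat)).det with hdd
    refine ⟨d⁻¹ * (a + b), -(d⁻¹ * b), ?_⟩
    show ((v⁻¹ : GL2) : Mat) = _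
    rw [Matrix.coe_units_inv]
    apply Matrix.inv_eq_right_inv
    rw [hv, T_mul]
    have c1 : a * (d⁻¹ * (a + b)) + b * -(d⁻¹ * b) * n = 1 := by
      field_simp
      linear_combination hd2.symm
    have c0 : a * -(d⁻¹ * b) + b * (d⁻¹ * (a + b)) + b * -(d⁻¹ * b) = 0 := by
      field_simp
      ring
    rw [c1, c0]
    simp

lemma Tsub_comm {n : F} (x y : ↥(Tsub n)) : x * y = y * x := by
  obtain ⟨v, a, b, hv⟩ := x
  obtain ⟨w, c, d, hw⟩ := y
  apply Subtype.ext
  apply Units.ext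
  show (v : Mat) * (w : Mat) = (w : Mat) * (v : Mat)
  rw [hv, hw, T_mul, T_mul,
    show a * c + b * d * n = c * a + d * b * n by ring,
    show a * d + b * c + b * d = c * b + d * a + d * b by ring]

instance {n : F} : Group.IsSolvable ↥(Tsub n) := isSolvable_of_comm Tsub_comm

/-- The diagonal character of the Borel subgroup. -/
def dHom : ↥(Bup (F := F)) →* Fˣ :=
  MonoidHom.mk'
    (fun u =>
      { val := ((u.val : GL2) : Mat) 0 0
        inv := ((u.val : GL2) : Mat) 1 1
        val_inv := by
          have h := u.prop.2
          rw [Matrix.det_fin_two, u.prop.1, mul_zero, sub_zero] at h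
          exact h
        inv_val := by
          have h := u.prop.2
          rw [Matrix.det_fin_two, u.prop.1, mul_zero, sub_zero] at h
          rw [mul_comm]
          exact h })
    (fun u v => by
      apply Units.ext
      show (((u * v).val : GL2) : Mat) 0 0 = ((u.val : GL2) : Mat) 0 0 * ((v.val : GL2) : Mat) 0 0
      rw [show ((u * v).val : GL2) = (u.val : GL2) * (v.val : GL2) from rfl, Units.val_mul,
        Matrix.mul_apply, Fin.sum_univ_two, v.prop.1, mul_zero, add_zero])

lemma ker_dHom_shape (x : ↥((dHom (F := F)).ker)) :
    ∃ b : F, ((x.val.val : GL2) : Mat) = !![1, b; 0, 1] := by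
  have h1 : ((x.val.val : GL2) : Mat) 0 0 = 1 := by
    have h := x.prop
    rw [MonoidHom.mem_ker] at h
    exact congrArg Units.val h
  have h2 : ((x.val.val : GL2) : Mat) 1 0 = 0 := x.val.prop.1
  have h3 : ((x.val.val : GL2) : Mat) 1 1 = 1 := by
    have h := x.val.prop.2
    rw [Matrix.det_fin_two, h1, h2, mul_zero, sub_zero, one_mul] at h
    exact h
  refine ⟨((x.val.val : GL2) : Mat) 0 1, ?_⟩
  ext i j
  fin_cases i <;> fin_cases j <;> simp [h1, h2, h3]

lemma ker_dHom_comm (x y : ↥((dHom (F := F)).ker)) : x * y = y * x := by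
  obtain ⟨b, hb⟩ := ker_dHom_shape x
  obtain ⟨c, hc⟩ := ker_dHom_shape y
  apply Subtype.ext
  apply Subtype.ext
  apply Units.ext
  show ((x.val.val : GL2) : Mat) * ((y.val.val : GL2) : Mat)
    = ((y.val.val : GL2) : Mat) * ((x.val.val : GL2) : Mat)
  rw [hb, hc]
  ext i j
  fin_cases i <;> fin_cases j <;> simp [Matrix.mul_apply, Fin.sum_univ_two] <;> ring

instance : Group.IsSolvable ↥((dHom (F := F)).ker) := isSolvable_of_comm ker_dHom_comm

instance : Group.IsSolvable ↥(Bup (F := F)) :=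
  solvable_of_ker_le_range (dHom (F := F)).ker.subtype dHom
    (by rw [Subgroup.range_subtype])

/-- Embedding of the Borel subgroup into `P n`. -/
def fP (n : F) : ↥(Bup (F := F)) →* ↥(P n) :=
  MonoidHom.mk'
    (fun u => ⟨(u.val, (1 : (GL2)ᵐᵒᵖ)), by
      refine ⟨?_, u.prop.1, 1, 0, ?_⟩
      · show ((u.val : GL2) : Mat).det * (((1 : GL2) : Mat)).det = 1
        rw [u.prop.2, Units.val_one, Matrix.det_one, mul_one]
      · show ((1 : GL2) : Mat) = _
        simp⟩)
    (fun u v => by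
      apply Subtype.ext
      show (_, _) = _
      rw [show ((u * v).val : GL2) = (u.val : GL2) * (v.val : GL2) from rfl]
      show _ = ((u.val : GL2) * (v.val : GL2), (1 : (GL2)ᵐᵒᵖ) * 1)
      rw [mul_one])

/-- Projection of `P n` onto the torus. -/
def gPT (n : F) : ↥(P n) →* ↥(Tsub n) :=
  MonoidHom.mk'
    (fun p => ⟨(unop p.val.2)⁻¹, (Tsub n).inv_mem p.prop.2.2⟩)
    (fun p q => by
      apply Subtype.ext
      show (unop ((p * q).val.2))⁻¹ = (unop p.val.2)⁻¹ * (unop q.val.2)⁻¹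
      rw [show (p * q).val.2 = p.val.2 * q.val.2 from rfl, unop_mul, _root_.mul_inv_rev])

lemma ker_gPT_le (n : F) : (gPT n).ker ≤ (fP n).range := by
  intro p hp
  rw [MonoidHom.mem_ker] at hp
  have h2 : (unop p.val.2)⁻¹ = 1 := congrArg Subtype.val hp
  have h3 : unop p.val.2 = 1 := by rwa [inv_eq_one] at h2
  have h4 : p.val.2 = 1 := by
    have := congrArg op h3
    rwa [op_unop, op_one] at this
  have hmem : p.val.1 ∈ Bup (F := F) := by
    refine ⟨p.prop.2.1, ?_⟩
    have hd := p.prop.1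
    rw [h3, Units.val_one, Matrix.det_one, mul_one] at hd
    exact hd
  refine ⟨⟨p.val.1, hmem⟩, ?_⟩
  apply Subtype.ext
  show (p.val.1, (1 : (GL2)ᵐᵒᵖ)) = p.val
  rw [← h4]

instance {n : F} : Group.IsSolvable ↥(P n) :=
  solvable_of_ker_le_range (fP n) (gPT n) (ker_gPT_le n)

lemma exists_n (F : Type*) [Field F] [Finite F] : ∃ m : F, ∀ c : F, c * c + c ≠ m := by
  have hni : ¬Function.Injective (fun c : F => c * c + c) := by
    intro h
    have h01 : (0 : F) = -1 := h (by norm_num)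
    have h1 : (1 : F) = 0 := by linear_combination h01
    exact one_ne_zero h1
  have hns : ¬Function.Surjective (fun c : F => c * c + c) := fun hs =>
    hni (Finite.injective_iff_surjective.mpr hs)
  rw [Function.Surjective] at hns
  push_neg at hns
  obtain ⟨m, hm⟩ := hns
  exact ⟨m, fun c => hm c⟩

end Stmt19

/-- For every prime power `q ≠ 2, 3`, there is a solvable group `G` of order
`|PSL₂(F_q)|` such that `Hol(PSL₂(F_q))` contains a regular subgroup isomorphic to
`G`: that is, `Hol(PSL₂(F_q))` contains a solvable regular subgroup. -/
theorem stmt19 {F : Type*} [Field F] [Fintype F]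
    (hq2 : Fintype.card F ≠ 2) (hq3 : Fintype.card F ≠ 3) :
    ∃ Δ : Subgroup (Equiv.Perm (PSL2 F)),
      Δ ≤ Hol (PSL2 F) ∧ IsRegularSubgroup Δ ∧ IsSolvable Δ := by
  obtain ⟨n, hn⟩ := Stmt19.exists_n F
  refine ⟨(Stmt19.theta n).range, ?_, ⟨?_, ?_⟩, ?_⟩
  · rintro δ ⟨p, rfl⟩
    exact Stmt19.theta_mem_Hol p
  · intro x y
    obtain ⟨px, hx⟩ := Stmt19.theta_transitive hn x
    obtain ⟨py, hy⟩ := Stmt19.theta_transitive hn y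
    refine ⟨Stmt19.theta n (py * px⁻¹), ⟨_, rfl⟩, ?_⟩
    rw [map_mul, map_inv, Equiv.Perm.mul_apply, ← hx, Equiv.Perm.inv_def, Equiv.symm_apply_apply, hy]
  · rintro δ ⟨p, rfl⟩ hδ1 x hfx
    exact hδ1 (Stmt19.theta_free hn p x hfx)
  · exact solvable_of_surjective (Stmt19.theta n).rangeRestrict_surjective
end
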